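/- arXiv:2204.05612 — 9 statements merged into one kernel-verified Lean document; each statement's English description precedes it below -/
import Mathlib

section
/- For all j ∈ ℕ₀ and ℓ ∈ ℕ, the identity ∑_{k=0}^{2j+1} (-1)^k C(2j+1, k) (2/ℓ)^k · S(k+ℓ, ℓ) / C(k+ℓ, ℓ) = 0 holds, where S denotes the Stirling numbers of the second kind. -/
open scoped Classical BigOperators Nat

/-- Weighted Stirling numbers of the second kind (Carlitz). -/
noncomputable def weightedR (n k : ℕ) (r : ℝ) : ℝ :=
  (1 / (k ! : ℝ)) * ∑ j ∈ Finset.range (k + 1),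
    (-1 : ℝ) ^ (k - j) * (k.choose j) * (r + j) ^ n

/-- Central factorial numbers of the second kind. -/
noncomputable def centralT (n ℓ : ℕ) : ℝ :=
  (1 / (ℓ ! : ℝ)) * ∑ j ∈ Finset.range (ℓ + 1),
    (-1 : ℝ) ^ j * (ℓ.choose j) * ((ℓ : ℝ) / 2 - j) ^ n

/-- Stirling numbers of the second kind. -/
def stirlingS : ℕ → ℕ → ℕ
  | 0, 0 => 1
  | 0, _ + 1 => 0
  | _ + 1, 0 => 0
  | n + 1, k + 1 => (k + 1) * stirlingS n (k + 1) + stirlingS n k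

/-- The sinc function. -/
noncomputable def sinc (z : ℂ) : ℂ := if z = 0 then 1 else Complex.sin z / z

/-- The hyperbolic sinc function. -/
noncomputable def sinhc (z : ℂ) : ℂ := if z = 0 then 1 else Complex.sinh z / z

/-- Partial Bell polynomials. -/
noncomputable def bellB (n k : ℕ) (x : ℕ → ℝ) : ℝ :=
  ∑ ℓ ∈ Finset.univ.filter (fun ℓ : Fin n → Fin (n + 1) =>
      (∑ i, (i.1 + 1) * (ℓ i).1) = n ∧ (∑ i, (ℓ i).1) = k),
    ((n ! : ℝ) / ∏ i, ((ℓ i).1)!) * ∏ i, (x (i.1 + 1) / (i.1 + 1)!) ^ (ℓ i).1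

/-- Rising factorial of a real number. -/
noncomputable def risingF (x : ℝ) (k : ℕ) : ℝ := ∏ i ∈ Finset.range k, (x + i)

/-- Number of set partitions of an `n`-element set into `ℓ` odd-sized blocks. -/
noncomputable def oddPartCount (n ℓ : ℕ) : ℕ :=
  ((Finset.univ : Finset (Finset (Finset (Fin n)))).filter
    (fun P : Finset (Finset (Fin n)) => P.card = ℓ ∧ (∀ b ∈ P, Odd b.card) ∧
      ((P : Set (Finset (Fin n))).PairwiseDisjoint id) ∧
      P.sup id = Finset.univ)).card

open Finset

noncomputable def Aexp (n ℓ : ℕ) : ℝ :=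
  ∑ i ∈ Finset.range (ℓ + 1), (-1 : ℝ) ^ (ℓ + i) * (ℓ.choose i) * (i : ℝ) ^ n

lemma Aexp_rec (n ℓ : ℕ) :
    Aexp (n+1) (ℓ+1) = ((ℓ:ℝ)+1) * (Aexp n (ℓ+1) + Aexp n ℓ) := by
  have hB : Aexp n (ℓ+1) + Aexp n ℓ
      = ∑ t ∈ Finset.range (ℓ+1), (-1:ℝ)^(ℓ+t) * (ℓ.choose t) * ((t:ℝ)+1)^n := by
    rw [Aexp, Aexp,
      Finset.sum_range_succ' (fun s => (-1:ℝ)^(ℓ+1+s) * (((ℓ+1).choose s : ℕ):ℝ) * (s:ℝ)^n) (ℓ+1),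
      Finset.sum_range_succ' (fun s => (-1:ℝ)^(ℓ+s) * ((ℓ.choose s : ℕ):ℝ) * (s:ℝ)^n) ℓ]
    have hext : ∑ t ∈ Finset.range ℓ, (-1:ℝ)^(ℓ+(t+1)) * ((ℓ.choose (t+1) : ℕ):ℝ) * ((t+1:ℕ):ℝ)^n
        = ∑ t ∈ Finset.range (ℓ+1), (-1:ℝ)^(ℓ+(t+1)) * ((ℓ.choose (t+1) : ℕ):ℝ) * ((t+1:ℕ):ℝ)^n := by
      rw [Finset.sum_range_succ, Nat.choose_succ_self]
      simp
    beta_reduce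
    rw [hext]
    have hre : ∀ a b c d : ℝ, a + b + (c + d) = (a + c) + (b + d) := by intros; ring
    rw [hre, ← Finset.sum_add_distrib]
    have hz : ((-1:ℝ)^(ℓ+1+0) * (((ℓ+1).choose 0 : ℕ):ℝ) * ((0:ℕ):ℝ)^n)
        + ((-1:ℝ)^(ℓ+0) * ((ℓ.choose 0 : ℕ):ℝ) * ((0:ℕ):ℝ)^n) = 0 := by
      simp [pow_succ]
    rw [hz, add_zero]
    apply Finset.sum_congr rfl
    intro t ht
    have hsign : ((-1:ℝ))^(ℓ+1+(t+1)) = (-1:ℝ)^(ℓ+t) := by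
      rw [show ℓ+1+(t+1) = (ℓ+t)+2 by ring, pow_add]; norm_num
    have hsign2 : ((-1:ℝ))^(ℓ+(t+1)) = -(-1:ℝ)^(ℓ+t) := by
      rw [show ℓ+(t+1) = (ℓ+t)+1 by ring, pow_succ]; ring
    rw [hsign, hsign2, Nat.choose_succ_succ]
    push_cast
    ring
  rw [hB, Finset.mul_sum, Aexp,
    Finset.sum_range_succ' (fun s => (-1:ℝ)^(ℓ+1+s) * (((ℓ+1).choose s : ℕ):ℝ) * (s:ℝ)^(n+1)) (ℓ+1)]
  have hz : (-1:ℝ)^(ℓ+1+0) * (((ℓ+1).choose 0 : ℕ):ℝ) * ((0:ℕ):ℝ)^(n+1) = 0 := by simp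
  beta_reduce
  rw [hz, add_zero]
  apply Finset.sum_congr rfl
  intro t ht
  have hsign : ((-1:ℝ))^(ℓ+1+(t+1)) = (-1:ℝ)^(ℓ+t) := by
    rw [show ℓ+1+(t+1) = (ℓ+t)+2 by ring, pow_add]; norm_num
  have hc : (((ℓ+1).choose (t+1) : ℕ):ℝ) * ((t:ℝ)+1) = ((ℓ:ℝ)+1) * ((ℓ.choose t : ℕ):ℝ) := by
    exact_mod_cast (Nat.add_one_mul_choose_eq ℓ t).symm
  rw [hsign]
  push_cast
  linear_combination ((-1:ℝ)^(ℓ+t) * ((t:ℝ)+1)^n) * hc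

lemma stirling_eq (n ℓ : ℕ) : ((ℓ)! : ℝ) * (stirlingS n ℓ : ℝ) = Aexp n ℓ := by
  induction n generalizing ℓ with
  | zero =>
    cases ℓ with
    | zero => simp [stirlingS, Aexp]
    | succ m =>
      have h0 : stirlingS 0 (m+1) = 0 := rfl
      rw [h0]
      have h1 : ∑ i ∈ Finset.range (m+2), (-1:ℝ)^i * ((m+1).choose i) = 0 := by
        have := Int.alternating_sum_range_choose (n := m+1)
        rw [if_neg (Nat.succ_ne_zero m)] at this
        exact_mod_cast congrArg (fun z : ℤ => (z : ℝ)) this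
      have h2 : Aexp 0 (m+1) = (-1:ℝ)^(m+1) * ∑ i ∈ Finset.range (m+2), (-1:ℝ)^i * ((m+1).choose i) := by
        rw [Aexp, Finset.mul_sum]
        apply Finset.sum_congr rfl
        intro i _
        rw [pow_add]
        ring
      rw [h2, h1]
      simp
  | succ n ih =>
    cases ℓ with
    | zero =>
      have h0 : stirlingS (n+1) 0 = 0 := rfl
      rw [h0]
      simp [Aexp]
    | succ m =>
      have h0 : stirlingS (n+1) (m+1) = (m+1) * stirlingS n (m+1) + stirlingS n m := rfl
      rw [h0, Aexp_rec, ← ih (m+1), ← ih m, Nat.factorial_succ]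
      push_cast
      ring

lemma stirling_lt (n ℓ : ℕ) (h : n < ℓ) : stirlingS n ℓ = 0 := by
  induction n generalizing ℓ with
  | zero =>
    obtain ⟨m, rfl⟩ : ∃ m, ℓ = m + 1 := ⟨ℓ - 1, by omega⟩
    rfl
  | succ n ih =>
    obtain ⟨m, rfl⟩ : ∃ m, ℓ = m + 1 := ⟨ℓ - 1, by omega⟩
    have h1 : n < m + 1 := by omega
    have h2 : n < m := by omega
    show (m+1) * stirlingS n (m+1) + stirlingS n m = 0
    rw [ih (m+1) h1, ih m h2]
    ring

lemma sym_zero (N ℓ : ℕ) (h : Odd (N + ℓ)) :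
    ∑ i ∈ Finset.range (ℓ+1), (-1:ℝ)^(ℓ+i) * (ℓ.choose i) * ((i:ℝ) - ℓ/2)^N = 0 := by
  have key : ∑ i ∈ Finset.range (ℓ+1), (-1:ℝ)^(ℓ+i) * (ℓ.choose i) * ((i:ℝ) - ℓ/2)^N
      = - ∑ i ∈ Finset.range (ℓ+1), (-1:ℝ)^(ℓ+i) * (ℓ.choose i) * ((i:ℝ) - ℓ/2)^N := by
    conv_lhs => rw [← Finset.sum_range_reflect]
    rw [← Finset.sum_neg_distrib]
    apply Finset.sum_congr rfl
    intro i hi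
    have hi' : i ≤ ℓ := Nat.lt_succ_iff.mp (Finset.mem_range.mp hi)
    have hidx : ℓ + 1 - 1 - i = ℓ - i := by omega
    rw [hidx, Nat.choose_symm hi', Nat.cast_sub hi']
    have e1 : (-1:ℝ)^(ℓ+(ℓ-i)) = (-1:ℝ)^i := by
      have hsq : (-1:ℝ)^i * (-1:ℝ)^i = 1 := by
        rw [← pow_add, ← two_mul]
        exact (even_two_mul i).neg_one_pow
      have hsum : ℓ + (ℓ - i) + i = 2*ℓ := by omega
      calc (-1:ℝ)^(ℓ+(ℓ-i)) = (-1:ℝ)^(ℓ+(ℓ-i)) * ((-1:ℝ)^i * (-1:ℝ)^i) := by rw [hsq, mul_one]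
        _ = (-1:ℝ)^(ℓ+(ℓ-i)+i) * (-1:ℝ)^i := by rw [pow_add]; ring
        _ = (-1:ℝ)^i := by
            rw [hsum, pow_mul]
            norm_num
    have e2 : (-1:ℝ)^N = -(-1:ℝ)^ℓ := by
      have hsq : (-1:ℝ)^ℓ * (-1:ℝ)^ℓ = 1 := by
        rw [← pow_add, ← two_mul]
        exact (even_two_mul ℓ).neg_one_pow
      calc (-1:ℝ)^N = (-1:ℝ)^N * ((-1:ℝ)^ℓ * (-1:ℝ)^ℓ) := by rw [hsq, mul_one]
        _ = (-1:ℝ)^(N+ℓ) * (-1:ℝ)^ℓ := by rw [pow_add]; ring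
        _ = -(-1:ℝ)^ℓ := by rw [h.neg_one_pow]; ring
    have e3 : (-((i:ℝ) - (ℓ:ℝ)/2))^N = (-1:ℝ)^N * ((i:ℝ)-(ℓ:ℝ)/2)^N := by
      rw [neg_eq_neg_one_mul, mul_pow]
    rw [e1, show ((ℓ:ℝ) - (i:ℝ)) - (ℓ:ℝ)/2 = -((i:ℝ) - (ℓ:ℝ)/2) by ring, e3, e2, pow_add]
    ring
  linarith [key]

lemma conv_eq (n ℓ : ℕ) (a b : ℝ) :
    ∑ k ∈ Finset.range (n+1), a^(n-k)/((n-k))! * (b^(k+ℓ)/((k+ℓ))!)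
      = (a+b)^(n+ℓ)/((n+ℓ))!
        - ∑ m ∈ Finset.range ℓ, ((n+ℓ).choose m : ℝ) * (b^m * a^(n+ℓ-m)) / ((n+ℓ))! := by
  have hadd : (a+b)^(n+ℓ) = ∑ m ∈ Finset.range (n+ℓ+1), b^m * a^(n+ℓ-m) * ((n+ℓ).choose m : ℝ) := by
    rw [add_comm a b]
    exact_mod_cast add_pow b a (n+ℓ)
  have hsplit : ∑ m ∈ Finset.range (ℓ+(n+1)), b^m * a^(n+ℓ-m) * ((n+ℓ).choose m : ℝ)
      = ∑ m ∈ Finset.range ℓ, b^m * a^(n+ℓ-m) * ((n+ℓ).choose m : ℝ)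
        + ∑ k ∈ Finset.range (n+1), b^(ℓ+k) * a^(n+ℓ-(ℓ+k)) * ((n+ℓ).choose (ℓ+k) : ℝ) :=
    Finset.sum_range_add (fun m => b^m * a^(n+ℓ-m) * ((n+ℓ).choose m : ℝ)) ℓ (n+1)
  have hadd2 : (a+b)^(n+ℓ)
      = ∑ m ∈ Finset.range ℓ, b^m * a^(n+ℓ-m) * ((n+ℓ).choose m : ℝ)
        + ∑ k ∈ Finset.range (n+1), b^(ℓ+k) * a^(n+ℓ-(ℓ+k)) * ((n+ℓ).choose (ℓ+k) : ℝ) := by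
    rw [hadd, show n+ℓ+1 = ℓ+(n+1) by ring]
    exact hsplit
  rw [hadd2, add_div]
  have h3 : (∑ m ∈ Finset.range ℓ, b^m * a^(n+ℓ-m) * ((n+ℓ).choose m : ℝ))/((n+ℓ))!
      = ∑ m ∈ Finset.range ℓ, ((n+ℓ).choose m : ℝ) * (b^m * a^(n+ℓ-m)) / ((n+ℓ))! := by
    rw [Finset.sum_div]
    apply Finset.sum_congr rfl
    intro m _
    ring
  rw [h3, add_sub_cancel_left, Finset.sum_div]
  apply Finset.sum_congr rfl
  intro k hk
  have hk' : k ≤ n := Nat.lt_succ_iff.mp (Finset.mem_range.mp hk)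
  have h1 : n + ℓ - (ℓ + k) = n - k := by omega
  have h2 : ℓ + k ≤ n + ℓ := by omega
  rw [h1, Nat.cast_choose ℝ h2, h1, show ℓ + k = k + ℓ by ring]
  have hf1 : ((n+ℓ)! : ℝ) ≠ 0 := Nat.cast_ne_zero.mpr (Nat.factorial_ne_zero _)
  have hf2 : (((k+ℓ))! : ℝ) ≠ 0 := Nat.cast_ne_zero.mpr (Nat.factorial_ne_zero _)
  have hf3 : (((n-k))! : ℝ) ≠ 0 := Nat.cast_ne_zero.mpr (Nat.factorial_ne_zero _)
  field_simp

lemma key_term (k m ℓ : ℕ) (hodd : Odd (k+m)) (hℓ : 1 ≤ ℓ) (S : ℝ) :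
    (-1:ℝ)^k * (((k+m).choose k : ℕ) : ℝ) * (2/(ℓ:ℝ))^k * S / (((k+ℓ).choose ℓ : ℕ) : ℝ)
      = (-(((k+m))! : ℝ) * (2/(ℓ:ℝ))^(k+m))
          * ((-((ℓ:ℝ)/2))^m / ((((m))! : ℝ) * (((k+ℓ))! : ℝ)) * ((((ℓ))! : ℝ) * S)) := by
  have hl0 : (ℓ:ℝ) ≠ 0 := Nat.cast_ne_zero.mpr (by omega)
  have hm : (-1:ℝ)^m = -(-1:ℝ)^k := by
    have h1 : (-1:ℝ)^k * (-1:ℝ)^m = -1 := by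
      rw [← pow_add]; exact hodd.neg_one_pow
    have h2 : (-1:ℝ)^k * (-1:ℝ)^k = 1 := by
      rw [← pow_add, ← two_mul]; exact (even_two_mul k).neg_one_pow
    calc (-1:ℝ)^m = ((-1:ℝ)^k * (-1:ℝ)^k) * (-1:ℝ)^m := by rw [h2, one_mul]
      _ = (-1:ℝ)^k * ((-1:ℝ)^k * (-1:ℝ)^m) := by ring
      _ = -(-1:ℝ)^k := by rw [h1]; ring
  have e3 : (-((ℓ:ℝ)/2))^m = (-1:ℝ)^m * ((ℓ:ℝ)/2)^m := by
    rw [neg_eq_neg_one_mul, mul_pow]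
  rw [Nat.cast_choose ℝ (Nat.le_add_right k m), Nat.cast_choose ℝ (Nat.le_add_left ℓ k),
    Nat.add_sub_cancel_left, Nat.add_sub_cancel, e3, hm, pow_add, div_pow, div_pow, div_pow]
  have hf1 : ((k+m)! : ℝ) ≠ 0 := Nat.cast_ne_zero.mpr (Nat.factorial_ne_zero _)
  have hf2 : ((k+ℓ)! : ℝ) ≠ 0 := Nat.cast_ne_zero.mpr (Nat.factorial_ne_zero _)
  have hf3 : (((k))! : ℝ) ≠ 0 := Nat.cast_ne_zero.mpr (Nat.factorial_ne_zero _)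
  have hf4 : (((m))! : ℝ) ≠ 0 := Nat.cast_ne_zero.mpr (Nat.factorial_ne_zero _)
  have hf5 : (((ℓ))! : ℝ) ≠ 0 := Nat.cast_ne_zero.mpr (Nat.factorial_ne_zero _)
  have hp1 : (ℓ:ℝ)^k ≠ 0 := pow_ne_zero _ hl0
  have hp2 : (ℓ:ℝ)^m ≠ 0 := pow_ne_zero _ hl0
  have hp3 : (2:ℝ)^m ≠ 0 := pow_ne_zero _ two_ne_zero
  have hp4 : (2:ℝ)^k ≠ 0 := pow_ne_zero _ two_ne_zero
  field_simp

lemma main_aux (n ℓ : ℕ) (hodd : Odd n) (hℓ : 1 ≤ ℓ) :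
    ∑ k ∈ Finset.range (n+1),
      (-1:ℝ)^k * ((n.choose k : ℕ) : ℝ) * (2/(ℓ:ℝ))^k * (stirlingS (k+ℓ) ℓ : ℝ)
        / (((k+ℓ).choose ℓ : ℕ) : ℝ) = 0 := by
  have hterm : ∀ k ∈ Finset.range (n+1),
      (-1:ℝ)^k * ((n.choose k : ℕ) : ℝ) * (2/(ℓ:ℝ))^k * (stirlingS (k+ℓ) ℓ : ℝ)
          / (((k+ℓ).choose ℓ : ℕ) : ℝ)
        = (-(((n))! : ℝ) * (2/(ℓ:ℝ))^n) * ∑ i ∈ Finset.range (ℓ+1),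
            (-1:ℝ)^(ℓ+i) * ((ℓ.choose i : ℕ) : ℝ)
              * ((-((ℓ:ℝ)/2))^(n-k)/(((n-k))! : ℝ) * ((i:ℝ)^(k+ℓ)/(((k+ℓ))! : ℝ))) := by
    intro k hk
    have hk' : k ≤ n := Nat.lt_succ_iff.mp (Finset.mem_range.mp hk)
    obtain ⟨m, hm⟩ : ∃ m, n = k + m := ⟨n - k, by omega⟩
    subst hm
    rw [Nat.add_sub_cancel_left]
    have hin : ∑ i ∈ Finset.range (ℓ+1),
        (-1:ℝ)^(ℓ+i) * ((ℓ.choose i : ℕ) : ℝ)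
          * ((-((ℓ:ℝ)/2))^m/(((m))! : ℝ) * ((i:ℝ)^(k+ℓ)/(((k+ℓ))! : ℝ)))
        = (-((ℓ:ℝ)/2))^m / ((((m))! : ℝ) * (((k+ℓ))! : ℝ)) * Aexp (k+ℓ) ℓ := by
      rw [Aexp, Finset.mul_sum]
      apply Finset.sum_congr rfl
      intro i _
      ring
    rw [hin, ← stirling_eq (k+ℓ) ℓ]
    exact key_term k m ℓ hodd hℓ _
  rw [Finset.sum_congr rfl hterm, ← Finset.mul_sum]
  apply mul_eq_zero_of_right
  rw [Finset.sum_comm]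
  have hNodd : Odd (n + ℓ + ℓ) := by
    obtain ⟨t, ht⟩ := hodd
    exact ⟨t + ℓ, by omega⟩
  have hstep : ∀ i ∈ Finset.range (ℓ+1),
      ∑ k ∈ Finset.range (n+1),
        (-1:ℝ)^(ℓ+i) * ((ℓ.choose i : ℕ) : ℝ)
          * ((-((ℓ:ℝ)/2))^(n-k)/(((n-k))! : ℝ) * ((i:ℝ)^(k+ℓ)/(((k+ℓ))! : ℝ)))
      = (-1:ℝ)^(ℓ+i) * ((ℓ.choose i : ℕ) : ℝ) * (((i:ℝ) - (ℓ:ℝ)/2)^(n+ℓ)/(((n+ℓ))! : ℝ))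
        - ∑ m ∈ Finset.range ℓ,
            (-1:ℝ)^(ℓ+i) * ((ℓ.choose i : ℕ) : ℝ)
              * (((n+ℓ).choose m : ℝ) * ((i:ℝ)^m * (-((ℓ:ℝ)/2))^(n+ℓ-m)) / (((n+ℓ))! : ℝ)) := by
    intro i _
    rw [← Finset.mul_sum, conv_eq n ℓ (-((ℓ:ℝ)/2)) (i:ℝ),
      show -((ℓ:ℝ)/2) + (i:ℝ) = (i:ℝ) - (ℓ:ℝ)/2 by ring, mul_sub, Finset.mul_sum]
  rw [Finset.sum_congr rfl hstep, Finset.sum_sub_distrib]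
  have hA : ∑ i ∈ Finset.range (ℓ+1),
      (-1:ℝ)^(ℓ+i) * ((ℓ.choose i : ℕ) : ℝ) * (((i:ℝ) - (ℓ:ℝ)/2)^(n+ℓ)/(((n+ℓ))! : ℝ)) = 0 := by
    have : ∑ i ∈ Finset.range (ℓ+1),
        (-1:ℝ)^(ℓ+i) * ((ℓ.choose i : ℕ) : ℝ) * (((i:ℝ) - (ℓ:ℝ)/2)^(n+ℓ)/(((n+ℓ))! : ℝ))
        = (∑ i ∈ Finset.range (ℓ+1),
            (-1:ℝ)^(ℓ+i) * ((ℓ.choose i : ℕ) : ℝ) * ((i:ℝ) - (ℓ:ℝ)/2)^(n+ℓ))/(((n+ℓ))! : ℝ) := by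
      rw [Finset.sum_div]
      apply Finset.sum_congr rfl
      intro i _
      ring
    rw [this, sym_zero (n+ℓ) ℓ hNodd, zero_div]
  have hB : ∑ i ∈ Finset.range (ℓ+1), ∑ m ∈ Finset.range ℓ,
      (-1:ℝ)^(ℓ+i) * ((ℓ.choose i : ℕ) : ℝ)
        * (((n+ℓ).choose m : ℝ) * ((i:ℝ)^m * (-((ℓ:ℝ)/2))^(n+ℓ-m)) / (((n+ℓ))! : ℝ)) = 0 := by
    rw [Finset.sum_comm]
    apply Finset.sum_eq_zero
    intro m hm
    have hmℓ : m < ℓ := Finset.mem_range.mp hm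
    have h1 : ∑ i ∈ Finset.range (ℓ+1),
        (-1:ℝ)^(ℓ+i) * ((ℓ.choose i : ℕ) : ℝ)
          * (((n+ℓ).choose m : ℝ) * ((i:ℝ)^m * (-((ℓ:ℝ)/2))^(n+ℓ-m)) / (((n+ℓ))! : ℝ))
        = (((n+ℓ).choose m : ℝ) * (-((ℓ:ℝ)/2))^(n+ℓ-m) / (((n+ℓ))! : ℝ)) * Aexp m ℓ := by
      rw [Aexp, Finset.mul_sum]
      apply Finset.sum_congr rfl
      intro i _
      ring
    rw [h1, ← stirling_eq m ℓ, stirling_lt m ℓ hmℓ]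
    simp
  rw [hA, hB, sub_zero]


theorem stmt5 (j ℓ : ℕ) (hℓ : 1 ≤ ℓ) :
    ∑ k ∈ Finset.range (2 * j + 2),
      (-1 : ℝ) ^ k * ((2 * j + 1).choose k) * (2 / (ℓ : ℝ)) ^ k *
        (stirlingS (k + ℓ) ℓ) / ((k + ℓ).choose ℓ) = 0 := by
  have h := main_aux (2*j+1) ℓ ⟨j, by ring⟩ hℓ
  rw [show 2*j+2 = 2*j+1+1 by omega]
  exact h
end

section
/- For all j ∈ ℕ₀ and ℓ ∈ ℕ, the central factorial numbers of the second kind are expressed in terms of Stirling numbers of the second kind by T(j+ℓ, ℓ) / C(j+ℓ, ℓ) = ∑_{m=0}^{j} (-1)^m C(j, m) (ℓ/2)^m · S(j+ℓ-m, ℓ) / C(j+ℓ-m, ℓ). -/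
open scoped Classical BigOperators Nat

noncomputable def Aaux (k n : ℕ) : ℝ :=
  ∑ i ∈ Finset.range (k+1), (-1:ℝ)^i * (k.choose i) * ((k:ℝ) - i)^n

lemma choose_aux (k i : ℕ) : (k + 1 - i) * (k+1).choose i = (k+1) * k.choose i := by
  calc (k+1-i) * (k+1).choose i = (k+1).choose i * (k+1-i) := Nat.mul_comm _ _
    _ = (k+1).choose (i+1) * (i+1) := (Nat.choose_succ_right_eq _ _).symm
    _ = (k+1) * k.choose i := (Nat.add_one_mul_choose_eq k i).symm

lemma A_rec (k n : ℕ) : Aaux (k+1) (n+1) = ((k:ℝ)+1) * (Aaux (k+1) n + Aaux k n) := by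
  have h1 : Aaux (k+1) (n+1)
      = ((k:ℝ)+1) * ∑ i ∈ Finset.range (k+2), (-1:ℝ)^i * (k.choose i) * (((k:ℝ)+1) - i)^n := by
    rw [Aaux, Finset.mul_sum]
    refine Finset.sum_congr (by norm_num) (fun i hi => ?_)
    have hi' : i ≤ k+1 := Nat.lt_succ_iff.mp (Finset.mem_range.mp hi)
    have hcast : ((k+1:ℕ):ℝ) - i = ((k+1-i : ℕ) : ℝ) := (Nat.cast_sub hi').symm
    have hnat : ((k + 1 - i) * (k+1).choose i : ℕ) = (k+1) * k.choose i := choose_aux k i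
    have hmul : (((k:ℝ)+1) - i) * ((k+1).choose i : ℝ) = ((k:ℝ)+1) * (k.choose i) := by
      have : (((k+1-i : ℕ) : ℝ)) * ((k+1).choose i : ℝ) = ((k:ℝ)+1) * (k.choose i) := by
        exact_mod_cast congrArg (Nat.cast : ℕ → ℝ) hnat
      rw [show ((k:ℝ)+1) - i = ((k+1:ℕ):ℝ) - i by push_cast; ring, hcast]
      exact this
    push_cast
    calc (-1:ℝ)^i * ((k+1).choose i) * (((k:ℝ)+1) - i)^(n+1)
        = ((((k:ℝ)+1) - i) * ((k+1).choose i)) * ((-1:ℝ)^i * (((k:ℝ)+1) - i)^n) := by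
          rw [pow_succ]; ring
      _ = (((k:ℝ)+1) * (k.choose i)) * ((-1:ℝ)^i * (((k:ℝ)+1) - i)^n) := by rw [hmul]
      _ = ((k:ℝ)+1) * ((-1:ℝ)^i * (k.choose i) * (((k:ℝ)+1) - i)^n) := by ring
  rw [h1]
  congr 1
  -- Ssum = Aaux (k+1) n + Aaux k n
  rw [Aaux, Aaux, Finset.sum_range_succ' (fun i => (-1:ℝ)^i * (k.choose i) * (((k:ℝ)+1) - i)^n),
    Finset.sum_range_succ' (fun i => (-1:ℝ)^i * ((k+1).choose i) * (((k+1:ℕ):ℝ) - i)^n)]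
  push_cast
  simp only [Nat.choose_zero_right, pow_zero, Nat.cast_one]
  conv_rhs => rw [add_right_comm]
  rw [← Finset.sum_add_distrib]
  congr 1
  refine Finset.sum_congr rfl (fun i hi => ?_)
  have hp : ((k+1).choose (i+1) : ℝ) = (k.choose i : ℝ) + (k.choose (i+1) : ℝ) := by
    exact_mod_cast congrArg (Nat.cast : ℕ → ℝ) (Nat.choose_succ_succ k i)
  have hx : ((k:ℝ)+1) - ((i:ℝ)+1) = (k:ℝ) - i := by ring
  push_cast
  rw [hx, hp]
  ring

lemma stirling_zero : ∀ n k, n < k → stirlingS n k = 0 := by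
  intro n
  induction n with
  | zero => intro k hk; match k, hk with | (k+1), _ => rfl
  | succ n ih =>
    intro k hk
    match k, hk with
    | (k+1), hk =>
      have h1 : n < k + 1 := by omega
      have h2 : n < k := by omega
      simp [stirlingS, ih _ h1, ih _ h2]

lemma stirling_formula : ∀ n k, ((k)! : ℝ) * stirlingS n k = Aaux k n := by
  intro n
  induction n with
  | zero =>
    intro k
    match k with
    | 0 => simp [stirlingS, Aaux]
    | (k+1) =>
      have h : (∑ i ∈ Finset.range (k+2), (-1:ℝ)^i * ((k+1).choose i)) = 0 := by
        have h := Int.alternating_sum_range_choose (n := k+1)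
        rw [if_neg (Nat.succ_ne_zero k)] at h
        have h2 : ((∑ i ∈ Finset.range (k+2), (-1:ℤ)^i * ((k+1).choose i) : ℤ) : ℝ) = 0 := by
          rw [h]; norm_num
        push_cast at h2
        convert h2 using 2
      have hs : stirlingS 0 (k+1) = 0 := rfl
      rw [hs]
      simp only [Aaux, pow_zero, mul_one, Nat.cast_zero, mul_zero]
      exact h.symm
  | succ n ih =>
    intro k
    match k with
    | 0 => simp [stirlingS, Aaux]
    | (k+1) =>
      have key := A_rec k n
      have e1 := ih (k+1)
      have e2 := ih k
      have : ((k+1)! : ℝ) * stirlingS (n+1) (k+1)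
          = ((k:ℝ)+1) * (((k+1)! : ℝ) * stirlingS n (k+1)) + ((k:ℝ)+1) * ((k ! : ℝ) * stirlingS n k) := by
        show ((k+1)! : ℝ) * (((k + 1) * stirlingS n (k+1) + stirlingS n k : ℕ) : ℝ) = _
        rw [Nat.factorial_succ]
        push_cast
        ring
      rw [this, e1, e2, ← mul_add, ← key]

lemma key1 (j ℓ : ℕ) (hℓ : 1 ≤ ℓ) :
    centralT (j+ℓ) ℓ = ∑ m ∈ Finset.range (j+1),
      (-1:ℝ)^m * (((j+ℓ).choose m):ℝ) * ((ℓ:ℝ)/2)^m * (stirlingS (j+ℓ-m) ℓ : ℝ) := by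
  have hfac : ((ℓ)! : ℝ) ≠ 0 := Nat.cast_ne_zero.mpr (Nat.factorial_ne_zero ℓ)
  rw [centralT]
  have step1 : ∀ i : ℕ, ((ℓ:ℝ)/2 - i)^(j+ℓ)
      = ∑ m ∈ Finset.range (j+ℓ+1),
          (-((ℓ:ℝ)/2))^m * ((ℓ:ℝ) - i)^(j+ℓ-m) * ((j+ℓ).choose m) := by
    intro i
    rw [show (ℓ:ℝ)/2 - i = (-((ℓ:ℝ)/2)) + ((ℓ:ℝ) - i) by ring, add_pow]
  calc (1/((ℓ)! :ℝ)) * ∑ i ∈ Finset.range (ℓ+1), (-1:ℝ)^i * (ℓ.choose i) * ((ℓ:ℝ)/2 - i)^(j+ℓ)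
      = (1/((ℓ)!:ℝ)) * ∑ m ∈ Finset.range (j+ℓ+1), ∑ i ∈ Finset.range (ℓ+1),
          (-((ℓ:ℝ)/2))^m * ((j+ℓ).choose m) * ((-1:ℝ)^i * (ℓ.choose i) * ((ℓ:ℝ) - i)^(j+ℓ-m)) := by
        rw [Finset.sum_comm]
        congr 1
        refine Finset.sum_congr rfl fun i _ => ?_
        rw [step1 i, Finset.mul_sum]
        refine Finset.sum_congr rfl fun m _ => ?_
        ring
    _ = (1/((ℓ)!:ℝ)) * ∑ m ∈ Finset.range (j+ℓ+1),
          (-((ℓ:ℝ)/2))^m * ((j+ℓ).choose m) * (((ℓ)!:ℝ) * stirlingS (j+ℓ-m) ℓ) := by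
        congr 1
        refine Finset.sum_congr rfl fun m _ => ?_
        rw [← Finset.mul_sum,
          show (∑ i ∈ Finset.range (ℓ+1), (-1:ℝ)^i * (ℓ.choose i) * ((ℓ:ℝ) - i)^(j+ℓ-m))
            = Aaux ℓ (j+ℓ-m) from rfl, ← stirling_formula]
    _ = ∑ m ∈ Finset.range (j+ℓ+1),
          (-((ℓ:ℝ)/2))^m * ((j+ℓ).choose m) * (stirlingS (j+ℓ-m) ℓ : ℝ) := by
        rw [Finset.mul_sum]
        refine Finset.sum_congr rfl fun m _ => ?_
        field_simp
    _ = ∑ m ∈ Finset.range (j+1),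
          (-1:ℝ)^m * (((j+ℓ).choose m):ℝ) * ((ℓ:ℝ)/2)^m * (stirlingS (j+ℓ-m) ℓ : ℝ) := by
        rw [← Finset.sum_subset (Finset.range_subset_range.mpr (by omega : j+1 ≤ j+ℓ+1))]
        · refine Finset.sum_congr rfl fun m _ => ?_
          rw [neg_pow]
          ring
        · intro m hm hnm
          have hmj : j + 1 ≤ m := by
            by_contra hcon
            exact hnm (Finset.mem_range.mpr (by omega))
          have hz : stirlingS (j+ℓ-m) ℓ = 0 := stirling_zero _ _ (by omega)
          simp [hz]

theorem stmt6 (j ℓ : ℕ) (hℓ : 1 ≤ ℓ) :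
    centralT (j + ℓ) ℓ / ((j + ℓ).choose ℓ) =
      ∑ m ∈ Finset.range (j + 1),
        (-1 : ℝ) ^ m * (j.choose m) * ((ℓ : ℝ) / 2) ^ m *
          (stirlingS (j + ℓ - m) ℓ) / ((j + ℓ - m).choose ℓ) := by
  rw [key1 j ℓ hℓ, Finset.sum_div]
  refine Finset.sum_congr rfl fun m hm => ?_
  have hm' : m ≤ j := Nat.lt_succ_iff.mp (Finset.mem_range.mp hm)
  have h1 : ℓ ≤ j + ℓ := Nat.le_add_left _ _
  have h2 : ℓ ≤ j + ℓ - m := by omega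
  have hc1 : (0:ℝ) < ((j+ℓ).choose ℓ) := by exact_mod_cast Nat.choose_pos h1
  have hc2 : (0:ℝ) < ((j+ℓ-m).choose ℓ) := by exact_mod_cast Nat.choose_pos h2
  have hnat : (j+ℓ).choose m * ((j+ℓ-m).choose ℓ) = j.choose m * ((j+ℓ).choose ℓ) := by
    have e1 := Nat.choose_mul (n := j+ℓ) (show m ≤ ℓ+m by omega)
    have e2 := Nat.choose_mul (n := j+ℓ) (show ℓ ≤ ℓ+m by omega)
    rw [show ℓ+m-m = ℓ by omega] at e1
    rw [show ℓ+m-ℓ = m by omega, show j+ℓ-ℓ = j by omega] at e2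
    have hsym : (ℓ+m).choose m = (ℓ+m).choose ℓ := by
      rw [← Nat.choose_symm (show ℓ ≤ ℓ+m by omega), show ℓ+m-ℓ = m by omega]
    rw [hsym] at e1
    rw [← e1, e2]
    ring
  have hcast : ((j+ℓ).choose m : ℝ) * ((j+ℓ-m).choose ℓ : ℝ)
      = (j.choose m : ℝ) * ((j+ℓ).choose ℓ : ℝ) := by exact_mod_cast hnat
  rw [div_eq_div_iff (ne_of_gt hc1) (ne_of_gt hc2)]
  linear_combination ((-1:ℝ)^m * ((ℓ:ℝ)/2)^m * (stirlingS (j+ℓ-m) ℓ : ℝ)) * hcast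
end

section
/- For every integer k ≥ 2 and every ℓ with 1 ≤ ℓ ≤ k - 1, the alternating sum ∑_{j=1}^{k} (-1)^j C(k, j) T(2ℓ + j, j) / C(2ℓ + j, j) = 0 holds. -/
open scoped Classical BigOperators Nat

open PowerSeries Finset

noncomputable def Gs : PowerSeries ℝ :=
  PowerSeries.mk fun n => if Even n then (((n + 1)! : ℝ) * 2 ^ n)⁻¹ else 0

lemma rescale_exp_pow (a : ℝ) (m : ℕ) :
    (rescale a (exp ℝ)) ^ m = rescale (m * a) (exp ℝ) := by
  induction m with
  | zero => simp [rescale_zero, constantCoeff_exp]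
  | succ n ih =>
      rw [pow_succ, ih, exp_mul_exp_eq_exp_add]
      push_cast; ring_nf

lemma XG_eq : (X : PowerSeries ℝ) * Gs
    = rescale (1/2 : ℝ) (exp ℝ) - rescale (-(1/2) : ℝ) (exp ℝ) := by
  ext n
  cases n with
  | zero =>
      rw [coeff_zero_eq_constantCoeff, map_mul, constantCoeff_X, zero_mul, map_sub]
      simp [← coeff_zero_eq_constantCoeff_apply, coeff_rescale, coeff_exp]
  | succ m =>
      rw [coeff_succ_X_mul, map_sub, coeff_rescale, coeff_rescale, coeff_exp]
      simp only [Gs, coeff_mk]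
      have hmap : ((algebraMap ℚ ℝ) (1 / ((m + 1)! : ℚ))) = ((m+1)! : ℝ)⁻¹ := by
        push_cast; simp
      rw [hmap]
      rcases Nat.even_or_odd m with he | ho
      · rw [if_pos he, (he.add_one).neg_pow]
        have h2 : ((m+1)! : ℝ) ≠ 0 := by positivity
        field_simp
        have h22 : (2:ℝ)^m * (1/2)^m = 1 := by rw [← mul_pow]; norm_num
        rw [pow_succ, ← mul_assoc, h22]; norm_num
      · rw [if_neg (Nat.not_even_iff_odd.mpr ho), (ho.add_one).neg_pow, sub_self]

lemma coeff_XG_pow (j n : ℕ) :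
    (coeff n) (((X : PowerSeries ℝ) * Gs) ^ j)
      = (∑ i ∈ Finset.range (j + 1),
          (-1 : ℝ) ^ (j - i) * (j.choose i) * ((i : ℝ) - j / 2) ^ n) / n ! := by
  rw [XG_eq, sub_eq_add_neg, add_pow, map_sum, Finset.sum_div]
  refine Finset.sum_congr rfl fun i hi => ?_
  have hij : i ≤ j := Nat.lt_succ_iff.mp (Finset.mem_range.mp hi)
  have hcast : (((j - i : ℕ)) : ℝ) = (j : ℝ) - i := by
    push_cast [Nat.cast_sub hij]; ring
  have step : (rescale (1/2 : ℝ) (exp ℝ)) ^ i * (-(rescale (-(1/2) : ℝ) (exp ℝ))) ^ (j - i)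
        * ((j.choose i : ℕ) : ℝ⟦X⟧)
      = C (R := ℝ) ((-1 : ℝ) ^ (j - i) * (j.choose i))
        * (rescale ((i : ℝ) * (1/2)) (exp ℝ) * rescale (((j - i : ℕ) : ℝ) * (-(1/2))) (exp ℝ)) := by
    rw [neg_pow, rescale_exp_pow, rescale_exp_pow, map_mul, map_pow, map_neg, map_one,
      map_natCast (C (R := ℝ))]
    ring
  rw [step, exp_mul_exp_eq_exp_add, coeff_C_mul, coeff_rescale, coeff_exp]
  have : (i : ℝ) * (1/2) + ((j - i : ℕ) : ℝ) * (-(1/2)) = (i : ℝ) - j / 2 := by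
    rw [hcast]; ring
  rw [this]
  have hmap : ((algebraMap ℚ ℝ) (1 / (n ! : ℚ))) = (n ! : ℝ)⁻¹ := by push_cast; simp
  rw [hmap]
  ring

lemma coeff_G_pow (ℓ j : ℕ) :
    (coeff (2 * ℓ)) (Gs ^ j) = (j ! : ℝ) * centralT (2 * ℓ + j) j / (2 * ℓ + j)! := by
  have h1 : ((X : ℝ⟦X⟧) * Gs) ^ j = X ^ j * Gs ^ j := mul_pow _ _ _
  have h2 := coeff_XG_pow j (2 * ℓ + j)
  rw [h1, coeff_X_pow_mul] at h2
  have hsum : ∑ i ∈ Finset.range (j + 1),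
        (-1 : ℝ) ^ (j - i) * (j.choose i) * ((i : ℝ) - j / 2) ^ (2 * ℓ + j)
      = ∑ i ∈ Finset.range (j + 1),
        (-1 : ℝ) ^ i * (j.choose i) * ((j : ℝ) / 2 - i) ^ (2 * ℓ + j) := by
    refine Finset.sum_congr rfl fun i hi => ?_
    have hij : i ≤ j := Nat.lt_succ_iff.mp (Finset.mem_range.mp hi)
    have hsq : ∀ m : ℕ, (-1 : ℝ) ^ m * (-1) ^ m = 1 := by
      intro m; rw [← pow_add, ← two_mul, pow_mul]; norm_num
    have h3 : (-1 : ℝ) ^ (j - i) = (-1) ^ j * (-1) ^ i := by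
      have hh : (-1 : ℝ) ^ (j - i) * (-1) ^ i = (-1) ^ j := by
        rw [← pow_add, Nat.sub_add_cancel hij]
      calc (-1 : ℝ) ^ (j - i) = (-1) ^ (j - i) * ((-1) ^ i * (-1) ^ i) := by
            rw [hsq, mul_one]
        _ = ((-1) ^ (j - i) * (-1) ^ i) * (-1) ^ i := by ring
        _ = (-1) ^ j * (-1) ^ i := by rw [hh]
    have h4 : ((i : ℝ) - j / 2) ^ (2 * ℓ + j)
        = (-1 : ℝ) ^ j * ((j : ℝ) / 2 - i) ^ (2 * ℓ + j) := by
      rw [show (i : ℝ) - j / 2 = -((j : ℝ) / 2 - i) by ring, neg_pow, pow_add, pow_mul]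
      norm_num
    rw [h3, h4]
    linear_combination ((-1 : ℝ) ^ i * (j.choose i) * ((j : ℝ) / 2 - i) ^ (2 * ℓ + j)) * hsq j
  rw [h2, hsum]
  unfold centralT
  have hj : (j ! : ℝ) ≠ 0 := by positivity
  field_simp

theorem stmt7 (k ℓ : ℕ) (hk : 2 ≤ k) (h1 : 1 ≤ ℓ) (h2 : ℓ ≤ k - 1) :
    ∑ j ∈ Finset.Icc 1 k,
      (-1 : ℝ) ^ j * (k.choose j) * centralT (2 * ℓ + j) j / ((2 * ℓ + j).choose j) = 0 := by
  have hterm : ∀ j : ℕ,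
      (-1 : ℝ) ^ j * (k.choose j) * centralT (2 * ℓ + j) j / ((2 * ℓ + j).choose j)
        = ((2 * ℓ)! : ℝ) * ((-1 : ℝ) ^ j * (k.choose j) * (coeff (2 * ℓ)) (Gs ^ j)) := by
    intro j
    rw [coeff_G_pow]
    have hch : (((2 * ℓ + j).choose j : ℕ) : ℝ) * (j ! : ℝ) * ((2 * ℓ)! : ℝ)
        = ((2 * ℓ + j)! : ℝ) := by
      have := Nat.choose_mul_factorial_mul_factorial (Nat.le_add_left j (2 * ℓ))
      rw [Nat.add_sub_cancel] at this
      exact_mod_cast this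
    have hch0 : (((2 * ℓ + j).choose j : ℕ) : ℝ) ≠ 0 := by
      exact_mod_cast Nat.cast_ne_zero.mpr (Nat.choose_pos (Nat.le_add_left j (2 * ℓ))).ne'
    have hf1 : ((2 * ℓ + j)! : ℝ) ≠ 0 := by positivity
    field_simp
    linear_combination (-(1:ℝ) * ((k.choose j) * centralT (2 * ℓ + j) j)) * hch
  have hsub : Finset.Icc 1 k ⊆ Finset.range (k + 1) := by
    intro x hx; simp only [Finset.mem_Icc] at hx; simp only [Finset.mem_range]; omega
  have hzero : ∀ x ∈ Finset.range (k + 1), x ∉ Finset.Icc 1 k →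
      (-1 : ℝ) ^ x * (k.choose x) * centralT (2 * ℓ + x) x / ((2 * ℓ + x).choose x) = 0 := by
    intro x hx hx'
    have hx0 : x = 0 := by
      simp only [Finset.mem_range] at hx; simp only [Finset.mem_Icc] at hx'; omega
    subst hx0
    have : centralT (2 * ℓ + 0) 0 = 0 := by
      have hne : 2 * ℓ + 0 ≠ 0 := by omega
      simp only [centralT]
      rw [Finset.sum_range_one]
      norm_num [zero_pow hne]
      omega
    rw [this]
    simp
  rw [Finset.sum_subset hsub hzero]
  simp_rw [hterm]
  rw [← Finset.mul_sum]
  have hexp : ∑ j ∈ Finset.range (k + 1),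
        (-1 : ℝ) ^ j * (k.choose j) * (coeff (2 * ℓ)) (Gs ^ j)
      = (coeff (2 * ℓ)) ((1 - Gs) ^ k) := by
    rw [show (1 - Gs : ℝ⟦X⟧) = -Gs + 1 by ring, add_pow, map_sum]
    refine Finset.sum_congr rfl fun i hi => ?_
    have hstep : (-Gs : ℝ⟦X⟧) ^ i * (1 : ℝ⟦X⟧) ^ (k - i) * ((k.choose i : ℕ) : ℝ⟦X⟧)
        = C (R := ℝ) ((-1 : ℝ) ^ i * (k.choose i)) * Gs ^ i := by
      rw [neg_pow, one_pow, map_mul, map_pow, map_neg, map_one, map_natCast (C (R := ℝ))]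
      ring
    rw [hstep, coeff_C_mul]
    try ring
  rw [hexp]
  have hdvd : (X : ℝ⟦X⟧) ^ 2 ∣ (1 - Gs) := by
    rw [X_pow_dvd_iff]
    intro m hm
    interval_cases m
    · rw [map_sub]
      simp [Gs, coeff_zero_eq_constantCoeff, PowerSeries.coeff_one]
    · rw [map_sub]
      simp [Gs, PowerSeries.coeff_one]
  obtain ⟨q, hq⟩ := pow_dvd_pow_of_dvd hdvd k
  rw [hq, ← pow_mul, coeff_X_pow_mul']
  rw [if_neg (by omega)]
  try ring
end

section
/- For n ≥ ℓ ≥ 0, the scaled central factorial number 𝒯(n, ℓ) = 2^{n-ℓ} T(n, ℓ) is a nonnegative integer equal to the number of set partitions of an n-element set into ℓ blocks all of odd size. -/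
open scoped Classical BigOperators Nat

noncomputable def fib' {n ℓ : ℕ} (f : Fin n → Fin ℓ) (i : Fin ℓ) : Finset (Fin n) :=
  Finset.univ.filter (fun t => f t = i)

lemma fib_mem {n ℓ : ℕ} {f : Fin n → Fin ℓ} {x : Fin n} {i : Fin ℓ} :
    x ∈ fib' f i ↔ f x = i := by simp [fib']

lemma fib_inj {n ℓ : ℕ} {f : Fin n → Fin ℓ} (hodd : ∀ i, Odd (fib' f i).card) :
    Function.Injective (fib' f) := by
  intro i j hij
  have hne : (fib' f i).Nonempty := Finset.card_pos.mp (hodd i).pos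
  obtain ⟨x, hx⟩ := hne
  have h1 : f x = i := fib_mem.mp hx
  have h2 : f x = j := fib_mem.mp (hij ▸ hx)
  rw [← h1, h2]

lemma countD (n ℓ : ℕ) :
    ((Finset.univ : Finset (Fin n → Fin ℓ)).filter
      (fun f => ∀ i, Odd (fib' f i).card)).card = ℓ ! * oddPartCount n ℓ := by
  classical
  set A := ((Finset.univ : Finset (Fin n → Fin ℓ)).filter
      (fun f => ∀ i, Odd (fib' f i).card)) with hA
  set T := ((Finset.univ : Finset (Finset (Finset (Fin n)))).filter
    (fun P : Finset (Finset (Fin n)) => P.card = ℓ ∧ (∀ b ∈ P, Odd b.card) ∧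
      ((P : Set (Finset (Fin n))).PairwiseDisjoint id) ∧
      P.sup id = Finset.univ)) with hT
  have hmaps : ∀ f ∈ A, Finset.image (fib' f) Finset.univ ∈ T := by
    intro f hf
    rw [hA, Finset.mem_filter] at hf
    have hodd := hf.2
    rw [hT, Finset.mem_filter]
    refine ⟨Finset.mem_univ _, ?_, ?_, ?_, ?_⟩
    · rw [Finset.card_image_of_injective _ (fib_inj hodd), Finset.card_univ, Fintype.card_fin]
    · intro b hb
      obtain ⟨i, _, rfl⟩ := Finset.mem_image.mp hb
      exact hodd i
    · intro b hb c hc hbc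
      simp only [Finset.coe_image, Set.mem_image, Finset.mem_coe] at hb hc
      obtain ⟨i, _, rfl⟩ := hb
      obtain ⟨j, _, rfl⟩ := hc
      show Disjoint (fib' f i) (fib' f j)
      rw [Finset.disjoint_left]
      intro x hxi hxj
      exact hbc (by rw [← fib_mem.mp hxi, ← fib_mem.mp hxj])
    · apply Finset.eq_univ_of_forall
      intro x
      rw [Finset.mem_sup]
      exact ⟨fib' f (f x), Finset.mem_image_of_mem _ (Finset.mem_univ _), fib_mem.mpr rfl⟩
  rw [Finset.card_eq_sum_card_fiberwise hmaps]
  rw [Finset.sum_congr rfl (fun P hP => ?_), Finset.sum_const, oddPartCount, ← hT,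
    smul_eq_mul, mul_comm]
  -- show each fiber has cardinality ℓ!
  rw [hT, Finset.mem_filter] at hP
  obtain ⟨-, hcard, hodd, hdisj, hsup⟩ := hP
  -- blocks of P are pairwise disjoint & cover; map to embeddings Fin ℓ ↪ ↥P
  have hblock_eq : ∀ b ∈ P, ∀ c ∈ P, ∀ x : Fin n, x ∈ b → x ∈ c → b = c := by
    intro b hb c hc x hxb hxc
    by_contra hne
    exact Finset.disjoint_left.mp (hdisj hb hc hne) hxb hxc
  have hcardP : Fintype.card {b // b ∈ P} = ℓ := by
    rw [Fintype.card_coe, hcard]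
  rw [show ℓ ! = (Finset.univ : Finset (Fin ℓ ↪ {b // b ∈ P})).card from ?_]
  swap
  · rw [Finset.card_univ, Fintype.card_embedding_eq, hcardP, Fintype.card_fin,
      Nat.descFactorial_self]
  -- unique block containing each point
  have hexu : ∀ x : Fin n, ∃! b, b ∈ P ∧ x ∈ b := by
    intro x
    have hx : x ∈ P.sup id := hsup ▸ Finset.mem_univ x
    rw [Finset.mem_sup] at hx
    obtain ⟨b, hb, hxb⟩ := hx
    exact ⟨b, ⟨hb, hxb⟩, fun c hc => hblock_eq c hc.1 b hb x hc.2 hxb⟩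
  have hsurj : ∀ σ : Fin ℓ ↪ {b // b ∈ P}, Function.Surjective σ := by
    intro σ
    exact ((Fintype.bijective_iff_injective_and_card σ).mpr
      ⟨σ.injective, by rw [Fintype.card_fin, hcardP]⟩).surjective
  have hexi : ∀ (σ : Fin ℓ ↪ {b // b ∈ P}) (x : Fin n),
      ∃! i : Fin ℓ, x ∈ ((σ i : {b // b ∈ P}) : Finset (Fin n)) := by
    intro σ x
    obtain ⟨b, ⟨hb, hxb⟩, -⟩ := hexu x
    obtain ⟨i, hi⟩ := hsurj σ ⟨b, hb⟩
    refine ⟨i, show x ∈ ((σ i : {b // b ∈ P}) : Finset (Fin n)) from by rw [hi]; exact hxb, ?_⟩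
    intro j hj
    apply σ.injective
    apply Subtype.ext
    exact hblock_eq _ (σ j).2 _ (σ i).2 x hj (by rw [hi]; exact hxb)
  have hfibrec : ∀ (σ : Fin ℓ ↪ {b // b ∈ P}) (i : Fin ℓ),
      fib' (fun x => (hexi σ x).choose) i = ((σ i : {b // b ∈ P}) : Finset (Fin n)) := by
    intro σ i
    ext x
    rw [fib_mem]
    constructor
    · rintro rfl
      exact (hexi σ x).choose_spec.1
    · intro hx
      exact ((hexi σ x).choose_spec.2 i hx).symm
  have hvalinj : ∀ σ : Fin ℓ ↪ {b // b ∈ P},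
      Function.Injective (fun k => ((σ k : {b // b ∈ P}) : Finset (Fin n))) := by
    intro σ a b hab
    exact σ.injective (Subtype.ext hab)
  refine Finset.card_bij'
    (fun f hf => ⟨fun k => ⟨fib' f k, ?_⟩, fun a b hab => ?_⟩)
    (fun σ _ => fun x => (hexi σ x).choose) (fun f hf => Finset.mem_univ _) ?_ ?_ ?_
  · rw [Finset.mem_filter] at hf
    exact hf.2 ▸ Finset.mem_image_of_mem _ (Finset.mem_univ k)
  · rw [Finset.mem_filter, hA, Finset.mem_filter] at hf
    exact fib_inj hf.1.2 (congrArg Subtype.val hab)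
  · -- the reconstructed function lies in the fiber
    intro σ _
    rw [Finset.mem_filter, hA, Finset.mem_filter]
    refine ⟨⟨Finset.mem_univ _, fun i => ?_⟩, ?_⟩
    · rw [hfibrec σ i]
      exact hodd _ (σ i).2
    · have himg : Finset.image (fib' fun x => (hexi σ x).choose) Finset.univ
          = Finset.image (fun k => ((σ k : {b // b ∈ P}) : Finset (Fin n))) Finset.univ :=
        Finset.image_congr (fun k _ => hfibrec σ k)
      rw [himg]
      apply Finset.eq_of_subset_of_card_le
      · intro b hb
        obtain ⟨k, -, rfl⟩ := Finset.mem_image.mp hb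
        exact (σ k).2
      · rw [Finset.card_image_of_injective _ (hvalinj σ), Finset.card_univ,
          Fintype.card_fin, hcard]
  · -- left inverse
    intro f hf
    funext x
    rw [Finset.mem_filter] at hf
    exact (hexi _ x).unique ((hexi _ x).choose_spec.1) (fib_mem.mpr rfl)
  · -- right inverse
    intro σ _
    apply Function.Embedding.ext
    intro k
    exact Subtype.ext (hfibrec σ k)

lemma lemA (n ℓ : ℕ) :
    (ℓ ! : ℝ) * 2 ^ n * centralT n ℓ =
      ∑ S ∈ (Finset.univ : Finset (Fin ℓ)).powerset,
        (-1 : ℝ) ^ S.card * ((ℓ : ℝ) - 2 * S.card) ^ n := by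
  rw [Finset.sum_powerset_apply_card (fun m => (-1:ℝ)^m * ((ℓ:ℝ) - 2*m)^n)]
  rw [Finset.card_univ, Fintype.card_fin, centralT]
  have hfac : (ℓ ! : ℝ) ≠ 0 := by positivity
  rw [show (ℓ ! : ℝ) * 2 ^ n * ((1 / (ℓ ! : ℝ)) * ∑ j ∈ Finset.range (ℓ + 1),
      (-1 : ℝ) ^ j * (ℓ.choose j) * ((ℓ : ℝ) / 2 - j) ^ n)
    = ∑ j ∈ Finset.range (ℓ + 1), (2:ℝ)^n * ((-1 : ℝ) ^ j * (ℓ.choose j) * ((ℓ : ℝ) / 2 - j) ^ n)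
    from by rw [Finset.mul_sum]; field_simp; rw [← Finset.sum_div]; field_simp; rw [Finset.mul_sum]; exact Finset.sum_congr rfl fun i _ => by ring]
  refine Finset.sum_congr rfl fun j _ => ?_
  rw [show ((ℓ:ℝ) - 2 * j) = 2 * ((ℓ:ℝ)/2 - j) from by ring, mul_pow, nsmul_eq_mul]
  ring

lemma lemB (n ℓ : ℕ) :
    ∑ S ∈ (Finset.univ : Finset (Fin ℓ)).powerset,
        (-1 : ℝ) ^ S.card * ((ℓ : ℝ) - 2 * S.card) ^ n
    = 2 ^ ℓ * (((Finset.univ : Finset (Fin n → Fin ℓ)).filter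
        (fun f => ∀ i, Odd (fib' f i).card)).card : ℝ) := by
  -- rewrite (ℓ - 2|S|) as a sum of signs
  have hsum : ∀ S : Finset (Fin ℓ),
      ((ℓ : ℝ) - 2 * S.card) = ∑ i : Fin ℓ, (if i ∈ S then (-1:ℝ) else 1) := by
    intro S
    rw [Finset.sum_ite, Finset.sum_const, Finset.sum_const]
    have h1 : Finset.univ.filter (fun i => i ∈ S) = S := by
      ext i; simp
    have h2 : (Finset.univ.filter (fun i => i ∉ S)).card = ℓ - S.card := by
      rw [Finset.filter_not, h1]
      simp [Finset.card_sdiff_of_subset (Finset.subset_univ S)]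
    rw [h1, h2]
    have := S.card_le_univ
    simp only [Finset.card_univ, Fintype.card_fin] at this
    rw [nsmul_eq_mul, nsmul_eq_mul, Nat.cast_sub this]
    ring
  calc ∑ S ∈ (Finset.univ : Finset (Fin ℓ)).powerset,
        (-1 : ℝ) ^ S.card * ((ℓ : ℝ) - 2 * S.card) ^ n
      = ∑ S ∈ (Finset.univ : Finset (Fin ℓ)).powerset,
          ∑ f ∈ (Finset.univ : Finset (Fin n → Fin ℓ)),
            (-1 : ℝ) ^ S.card * ∏ t, (if f t ∈ S then (-1:ℝ) else 1) := by
        refine Finset.sum_congr rfl fun S _ => ?_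
        rw [hsum S, Finset.sum_pow' Finset.univ (fun i => if i ∈ S then (-1:ℝ) else 1) n,
          Fintype.piFinset_univ, Finset.mul_sum]
    _ = ∑ f ∈ (Finset.univ : Finset (Fin n → Fin ℓ)),
          ∑ S ∈ (Finset.univ : Finset (Fin ℓ)).powerset,
            (-1 : ℝ) ^ S.card * ∏ t, (if f t ∈ S then (-1:ℝ) else 1) :=
        Finset.sum_comm
    _ = ∑ f ∈ (Finset.univ : Finset (Fin n → Fin ℓ)),
          (if (∀ i, Odd (fib' f i).card) then (2:ℝ)^ℓ else 0) := by
        refine Finset.sum_congr rfl fun f _ => ?_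
        have key : ∀ S ∈ (Finset.univ : Finset (Fin ℓ)).powerset,
            (-1 : ℝ) ^ S.card * ∏ t, (if f t ∈ S then (-1:ℝ) else 1)
            = (∏ i ∈ S, (-1:ℝ) ^ ((fib' f i).card + 1)) * ∏ i ∈ Finset.univ \ S, (1:ℝ) := by
          intro S _
          have hfib : (∏ t, (if f t ∈ S then (-1:ℝ) else 1))
              = ∏ i : Fin ℓ, (if i ∈ S then (-1:ℝ) else 1) ^ (fib' f i).card := by
            rw [← Finset.prod_fiberwise Finset.univ f (fun t => if f t ∈ S then (-1:ℝ) else 1)]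
            refine Finset.prod_congr rfl fun i _ => ?_
            rw [Finset.prod_congr rfl (fun t ht => ?_), Finset.prod_const]
            · rfl
            · simp only [Finset.mem_filter] at ht
              rw [ht.2]
          rw [hfib, Finset.prod_const]
          rw [← Finset.prod_mul_prod_compl S (fun i => (if i ∈ S then (-1:ℝ) else 1) ^ (fib' f i).card)]
          have e1 : ∏ i ∈ S, (if i ∈ S then (-1:ℝ) else 1) ^ (fib' f i).card
              = ∏ i ∈ S, (-1:ℝ) ^ (fib' f i).card :=
            Finset.prod_congr rfl fun i hi => by rw [if_pos hi]
          have e2 : ∏ i ∈ Sᶜ, (if i ∈ S then (-1:ℝ) else 1) ^ (fib' f i).card = 1 := by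
            refine Finset.prod_eq_one fun i hi => ?_
            rw [if_neg (Finset.mem_compl.mp hi), one_pow]
          rw [e1, e2, mul_one, one_pow, mul_one]
          rw [← Finset.prod_const (b := (-1:ℝ)) (s := S), ← Finset.prod_mul_distrib]
          exact Finset.prod_congr rfl fun i _ => by rw [pow_succ]; ring
        rw [Finset.sum_congr rfl key, ← Finset.prod_add (fun i => (-1:ℝ) ^ ((fib' f i).card + 1)) (fun _ => 1) Finset.univ]
        by_cases hodd : ∀ i, Odd (fib' f i).card
        · rw [if_pos hodd]
          rw [Finset.prod_congr rfl (fun i _ => ?_), Finset.prod_const, Finset.card_univ, Fintype.card_fin]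
          have : Even ((fib' f i).card + 1) := (hodd i).add_one
          rw [this.neg_one_pow]; norm_num
        · rw [if_neg hodd]
          push_neg at hodd
          obtain ⟨i, hi⟩ := hodd
          refine Finset.prod_eq_zero (Finset.mem_univ i) ?_
          rw [Nat.not_odd_iff_even] at hi
          have : Odd ((fib' f i).card + 1) := hi.add_one
          rw [this.neg_one_pow]; norm_num
    _ = 2 ^ ℓ * (((Finset.univ : Finset (Fin n → Fin ℓ)).filter
        (fun f => ∀ i, Odd (fib' f i).card)).card : ℝ) := by
        rw [Finset.sum_ite, Finset.sum_const, Finset.sum_const_zero, add_zero,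
          nsmul_eq_mul]
        ring

theorem stmt9 (n ℓ : ℕ) (h : ℓ ≤ n) :
    (2 : ℝ) ^ (n - ℓ) * centralT n ℓ = (oddPartCount n ℓ : ℝ) := by
  have E := (lemA n ℓ).trans ((lemB n ℓ).trans (by rw [countD n ℓ]))
  have hpow : (2:ℝ)^n = 2^(n-ℓ) * 2^ℓ := by rw [← pow_add]; congr 1; omega
  rw [hpow] at E
  push_cast at E
  have hne : ((ℓ ! : ℝ) * 2 ^ ℓ) ≠ 0 := by positivity
  apply mul_left_cancel₀ hne
  linear_combination E
end

section
/- For all k ≥ 2 and 1 ≤ ℓ < k, the identity ∑_{j=1}^{k} (-1)^{k-j} C(2ℓ+k, 2ℓ+j) 𝒯(2ℓ+j, j) = 0 holds, where 𝒯(n, j) = 2^{n-j} T(n, j) counts set partitions of an n-set into j odd-sized blocks. -/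
open scoped Classical BigOperators Nat

private lemma count_part_eq (N m j : ℕ) (A : Finset (Fin N)) (hA : A.card = m) :
    ((Finset.univ : Finset (Finset (Finset (Fin N)))).filter
      (fun P : Finset (Finset (Fin N)) => P.card = j ∧ (∀ b ∈ P, Odd b.card) ∧
        ((P : Set (Finset (Fin N))).PairwiseDisjoint id) ∧ P.sup id = A)).card
    = oddPartCount m j := by
  classical
  have hcard : Fintype.card {x : Fin N // x ∈ A} = m := by simpa using hA
  set e : Fin m ≃ {x : Fin N // x ∈ A} := (Fintype.equivFinOfCardEq hcard).symm with he
  set dn : Finset (Fin m) → Finset (Fin N) :=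
    fun c => c.image (fun i => (e i : Fin N)) with hdn
  set up : Finset (Fin N) → Finset (Fin m) :=
    fun b => Finset.univ.filter (fun i => (e i : Fin N) ∈ b) with hup
  have einj : Function.Injective (fun i : Fin m => (e i : Fin N)) := by
    intro i i' h
    exact e.injective (Subtype.ext h)
  have mem_dn : ∀ (c : Finset (Fin m)) (x : Fin N),
      x ∈ dn c ↔ ∃ i ∈ c, (e i : Fin N) = x := by
    intro c x; simp [hdn]
  have mem_up : ∀ (b : Finset (Fin N)) (i : Fin m), i ∈ up b ↔ (e i : Fin N) ∈ b := by
    intro b i; simp [hup]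
  have dn_up : ∀ b : Finset (Fin N), b ⊆ A → dn (up b) = b := by
    intro b hb
    ext x
    rw [mem_dn]
    constructor
    · rintro ⟨i, hi, rfl⟩
      exact (mem_up b i).1 hi
    · intro hx
      refine ⟨e.symm ⟨x, hb hx⟩, ?_, by simp⟩
      rw [mem_up]; simpa using hx
  have up_dn : ∀ c : Finset (Fin m), up (dn c) = c := by
    intro c
    ext i
    rw [mem_up, mem_dn]
    constructor
    · rintro ⟨i', hi', h⟩
      have : i' = i := einj h
      exact this ▸ hi'
    · intro hi; exact ⟨i, hi, rfl⟩
  have card_dn : ∀ c, (dn c).card = c.card := fun c => Finset.card_image_of_injective _ einj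
  have card_up : ∀ b, b ⊆ A → (up b).card = b.card := by
    intro b hb
    conv_rhs => rw [← dn_up b hb]
    rw [card_dn]
  rw [oddPartCount]
  refine Finset.card_bij' (fun P _ => P.image up) (fun Q _ => Q.image dn) ?_ ?_ ?_ ?_
  · intro P hP
    simp only [Finset.mem_filter, Finset.mem_univ, true_and] at hP ⊢
    obtain ⟨hcardP, hodd, hpd, hsup⟩ := hP
    have hbsub : ∀ b ∈ P, b ⊆ A := fun b hb => hsup ▸ Finset.le_sup (f := id) hb
    have upinj : Set.InjOn up P := by
      intro b hb b' hb' h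
      rw [← dn_up b (hbsub b hb), ← dn_up b' (hbsub b' hb'), h]
    refine ⟨?_, ?_, ?_, ?_⟩
    · rw [Finset.card_image_of_injOn upinj, hcardP]
    · intro b' hb'
      obtain ⟨b, hb, rfl⟩ := Finset.mem_image.1 hb'
      rw [card_up b (hbsub b hb)]
      exact hodd b hb
    · intro x hx y hy hxy
      obtain ⟨b, hb, rfl⟩ := Finset.mem_image.1 (Finset.mem_coe.1 hx)
      obtain ⟨b', hb', rfl⟩ := Finset.mem_image.1 (Finset.mem_coe.1 hy)
      have hbb' : b ≠ b' := fun h => hxy (by rw [h])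
      have hdisj : Disjoint b b' := hpd hb hb' hbb'
      simp only [Function.onFun, id]
      rw [Finset.disjoint_left]
      intro i hi hi'
      rw [mem_up] at hi hi'
      exact (Finset.disjoint_left.1 hdisj) hi hi'
    · ext i
      simp only [Finset.mem_univ, iff_true, Finset.mem_sup]
      have hiA : (e i : Fin N) ∈ P.sup id := by rw [hsup]; exact (e i).2
      rw [Finset.mem_sup] at hiA
      obtain ⟨b, hb, hib⟩ := hiA
      exact ⟨up b, Finset.mem_image_of_mem up hb, (mem_up b i).2 hib⟩
  · intro Q hQ
    simp only [Finset.mem_filter, Finset.mem_univ, true_and] at hQ ⊢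
    obtain ⟨hcardQ, hodd, hpd, hsup⟩ := hQ
    have dninj : Function.Injective dn := by
      intro c d h
      rw [← up_dn c, ← up_dn d, h]
    refine ⟨?_, ?_, ?_, ?_⟩
    · rw [Finset.card_image_of_injective _ dninj, hcardQ]
    · intro b hb
      obtain ⟨c, hc, rfl⟩ := Finset.mem_image.1 hb
      rw [card_dn]
      exact hodd c hc
    · intro x hx y hy hxy
      obtain ⟨c, hc, rfl⟩ := Finset.mem_image.1 (Finset.mem_coe.1 hx)
      obtain ⟨c', hc', rfl⟩ := Finset.mem_image.1 (Finset.mem_coe.1 hy)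
      have hcc' : c ≠ c' := fun h => hxy (by rw [h])
      have hdisj : Disjoint c c' := hpd hc hc' hcc'
      simp only [Function.onFun, id]
      rw [Finset.disjoint_left]
      intro x hx1 hx2
      rw [mem_dn] at hx1 hx2
      obtain ⟨i, hi, rfl⟩ := hx1
      obtain ⟨i', hi', h⟩ := hx2
      have : i' = i := einj h
      subst this
      exact (Finset.disjoint_left.1 hdisj) hi hi'
    · ext x
      rw [Finset.mem_sup]
      constructor
      · rintro ⟨b, hb, hxb⟩
        obtain ⟨c, hc, rfl⟩ := Finset.mem_image.1 hb
        rw [id_eq, mem_dn] at hxb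
        obtain ⟨i, _, rfl⟩ := hxb
        exact (e i).2
      · intro hx
        have : e.symm ⟨x, hx⟩ ∈ Q.sup id := by rw [hsup]; exact Finset.mem_univ _
        rw [Finset.mem_sup] at this
        obtain ⟨c, hc, hic⟩ := this
        refine ⟨dn c, Finset.mem_image_of_mem dn hc, ?_⟩
        rw [id_eq, mem_dn]
        exact ⟨e.symm ⟨x, hx⟩, hic, by simp⟩
  · intro P hP
    simp only [Finset.mem_filter, Finset.mem_univ, true_and] at hP
    obtain ⟨-, -, -, hsup⟩ := hP
    have hbsub : ∀ b ∈ P, b ⊆ A := fun b hb => hsup ▸ Finset.le_sup (f := id) hb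
    show (P.image up).image dn = P
    rw [Finset.image_image]
    have : Finset.image (dn ∘ up) P = Finset.image id P :=
      Finset.image_congr (fun b hb => dn_up b (hbsub b hb))
    rw [this, Finset.image_id]
  · intro Q hQ
    show (Q.image dn).image up = Q
    rw [Finset.image_image]
    have : Finset.image (up ∘ dn) Q = Finset.image id Q :=
      Finset.image_congr (fun c _ => up_dn c)
    rw [this, Finset.image_id]

private lemma card_omega (N m j : ℕ) :
    ((Finset.univ : Finset (Finset (Finset (Fin N)))).filter
      (fun P : Finset (Finset (Fin N)) => P.card = j ∧ (∀ b ∈ P, Odd b.card) ∧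
        ((P : Set (Finset (Fin N))).PairwiseDisjoint id) ∧ (P.sup id).card = m)).card
    = N.choose m * oddPartCount m j := by
  classical
  have hset : ((Finset.univ : Finset (Finset (Finset (Fin N)))).filter
      (fun P : Finset (Finset (Fin N)) => P.card = j ∧ (∀ b ∈ P, Odd b.card) ∧
        ((P : Set (Finset (Fin N))).PairwiseDisjoint id) ∧ (P.sup id).card = m))
      = (Finset.powersetCard m (Finset.univ : Finset (Fin N))).biUnion
        (fun A => (Finset.univ : Finset (Finset (Finset (Fin N)))).filter
          (fun P : Finset (Finset (Fin N)) => P.card = j ∧ (∀ b ∈ P, Odd b.card) ∧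
            ((P : Set (Finset (Fin N))).PairwiseDisjoint id) ∧ P.sup id = A)) := by
    ext P
    simp only [Finset.mem_filter, Finset.mem_univ, true_and, Finset.mem_biUnion,
      Finset.mem_powersetCard]
    constructor
    · rintro ⟨h1, h2, h3, h4⟩
      exact ⟨P.sup id, ⟨Finset.subset_univ _, h4⟩, h1, h2, h3, rfl⟩
    · rintro ⟨A, ⟨-, hA⟩, h1, h2, h3, rfl⟩
      exact ⟨h1, h2, h3, hA⟩
  rw [hset, Finset.card_biUnion]
  · rw [Finset.sum_congr rfl (fun A hA => count_part_eq N m j A (Finset.mem_powersetCard.1 hA).2)]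
    rw [Finset.sum_const, Finset.card_powersetCard, smul_eq_mul, Finset.card_univ,
      Fintype.card_fin]
  · intro A hA A' hA' hne
    rw [Function.onFun, Finset.disjoint_left]
    intro P hP hP'
    simp only [Finset.mem_filter] at hP hP'
    exact hne ((hP.2.2.2.2).symm.trans hP'.2.2.2.2)

theorem stmt10 (k ℓ : ℕ) (hk : 2 ≤ k) (h1 : 1 ≤ ℓ) (h2 : ℓ < k) :
    ∑ j ∈ Finset.Icc 1 k,
      (-1 : ℤ) ^ (k - j) * ((2 * ℓ + k).choose (2 * ℓ + j)) *
        (oddPartCount (2 * ℓ + j) j : ℤ) = 0 := by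
  classical
  set N := 2 * ℓ + k with hN
  set S : Finset (Finset (Finset (Fin N))) := Finset.univ.filter
    (fun P : Finset (Finset (Fin N)) => (∀ b ∈ P, Odd b.card) ∧
      ((P : Set (Finset (Fin N))).PairwiseDisjoint id) ∧
      (P.sup id).card = 2 * ℓ + P.card ∧ 1 ≤ P.card ∧ P.card ≤ k) with hSdef
  have memS : ∀ P : Finset (Finset (Fin N)), P ∈ S ↔ ((∀ b ∈ P, Odd b.card) ∧
      ((P : Set (Finset (Fin N))).PairwiseDisjoint id) ∧
      (P.sup id).card = 2 * ℓ + P.card ∧ 1 ≤ P.card ∧ P.card ≤ k) := by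
    intro P; simp [hSdef]
  -- fibers
  have hfib : ∀ j ∈ Finset.Icc 1 k,
      ((Finset.univ : Finset (Finset (Finset (Fin N)))).filter
        (fun P : Finset (Finset (Fin N)) => P.card = j ∧ (∀ b ∈ P, Odd b.card) ∧
          ((P : Set (Finset (Fin N))).PairwiseDisjoint id) ∧ (P.sup id).card = 2 * ℓ + j))
      = S.filter (fun P => P.card = j) := by
    intro j hj
    rw [Finset.mem_Icc] at hj
    ext P
    simp only [Finset.mem_filter, Finset.mem_univ, true_and, memS]
    constructor
    · rintro ⟨hc, h2', h3', h4'⟩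
      exact ⟨⟨h2', h3', by omega, by omega, by omega⟩, hc⟩
    · rintro ⟨⟨h2', h3', h4', h5', h6'⟩, hc⟩
      exact ⟨hc, h2', h3', by omega⟩
  -- per-fiber value
  have step1 : ∀ j ∈ Finset.Icc 1 k,
      (-1 : ℤ) ^ (k - j) * ((2 * ℓ + k).choose (2 * ℓ + j)) *
        (oddPartCount (2 * ℓ + j) j : ℤ)
      = ∑ P ∈ S.filter (fun P => P.card = j), (-1 : ℤ) ^ (k - P.card) := by
    intro j hj
    have hcount : ((S.filter (fun P => P.card = j)).card : ℤ)
        = ((2 * ℓ + k).choose (2 * ℓ + j) : ℤ) * (oddPartCount (2 * ℓ + j) j : ℤ) := by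
      rw [← hfib j hj, card_omega N (2 * ℓ + j) j]
      push_cast
      ring
    calc (-1 : ℤ) ^ (k - j) * ((2 * ℓ + k).choose (2 * ℓ + j)) *
          (oddPartCount (2 * ℓ + j) j : ℤ)
        = ((S.filter (fun P => P.card = j)).card : ℤ) * (-1 : ℤ) ^ (k - j) := by
          rw [hcount]; ring
      _ = ∑ P ∈ S.filter (fun P => P.card = j), (-1 : ℤ) ^ (k - j) := by
          rw [Finset.sum_const, nsmul_eq_mul]
      _ = ∑ P ∈ S.filter (fun P => P.card = j), (-1 : ℤ) ^ (k - P.card) := by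
          refine Finset.sum_congr rfl (fun P hP => ?_)
          rw [(Finset.mem_filter.1 hP).2]
  rw [Finset.sum_congr rfl step1]
  rw [Finset.sum_fiberwise_of_maps_to (g := fun P : Finset (Finset (Fin N)) => P.card)
    (t := Finset.Icc 1 k) (fun P hP => by
      rw [memS] at hP; rw [Finset.mem_Icc]; exact ⟨hP.2.2.2.1, hP.2.2.2.2⟩)]
  -- now the involution
  set cand : Finset (Finset (Fin N)) → Finset (Fin N) := fun P =>
    (Finset.univ \ P.sup id) ∪ Finset.univ.filter (fun a => ({a} : Finset (Fin N)) ∈ P)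
    with hcand
  have mem_cand : ∀ (P : Finset (Finset (Fin N))) (x : Fin N),
      x ∈ cand P ↔ (x ∉ P.sup id ∨ ({x} : Finset (Fin N)) ∈ P) := by
    intro P x; simp [hcand]
  have sup_ins : ∀ (P : Finset (Finset (Fin N))) (a : Fin N),
      (insert ({a} : Finset (Fin N)) P).sup id = insert a (P.sup id) := by
    intro P a
    rw [Finset.sup_insert]
    simp [Finset.insert_eq, -Finset.singleton_union]
  have supcard_sum : ∀ P : Finset (Finset (Fin N)),
      ((P : Set (Finset (Fin N))).PairwiseDisjoint id) →
      (P.sup id).card = ∑ b ∈ P, b.card := by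
    intro P hpd
    rw [Finset.sup_eq_biUnion, Finset.card_biUnion (fun x hx y hy hxy =>
      hpd (Finset.mem_coe.2 hx) (Finset.mem_coe.2 hy) hxy)]
    simp
  have cand_ne : ∀ P ∈ S, (cand P).Nonempty := by
    intro P hP
    rw [memS] at hP
    obtain ⟨hodd, hpd, hsc, hc1, hck⟩ := hP
    by_contra hemp
    rw [Finset.not_nonempty_iff_eq_empty] at hemp
    have hall : ∀ x : Fin N, x ∈ P.sup id ∧ ({x} : Finset (Fin N)) ∉ P := by
      intro x
      have hx : x ∉ cand P := by rw [hemp]; exact Finset.notMem_empty x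
      rw [mem_cand] at hx
      push_neg at hx
      exact hx
    have hsupuniv : P.sup id = Finset.univ := Finset.eq_univ_iff_forall.2 (fun x => (hall x).1)
    have hNc : (P.sup id).card = N := by rw [hsupuniv, Finset.card_univ, Fintype.card_fin]
    have hcard3 : ∀ b ∈ P, 3 ≤ b.card := by
      intro b hb
      obtain ⟨t, ht⟩ := hodd b hb
      by_contra hlt
      have hb1 : b.card = 1 := by omega
      obtain ⟨x, rfl⟩ := Finset.card_eq_one.1 hb1
      exact (hall x).2 hb
    have hsum := supcard_sum P hpd
    have h3 : 3 * P.card ≤ ∑ b ∈ P, b.card := by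
      calc 3 * P.card = ∑ _b ∈ P, 3 := by rw [Finset.sum_const, smul_eq_mul]; ring
        _ ≤ ∑ b ∈ P, b.card := Finset.sum_le_sum hcard3
    omega
  have insS : ∀ P ∈ S, ∀ a : Fin N, a ∉ P.sup id →
      insert ({a} : Finset (Fin N)) P ∈ S := by
    intro P hP a ha
    rw [memS] at hP ⊢
    obtain ⟨hodd, hpd, hsc, hc1, hck⟩ := hP
    have hnot : ({a} : Finset (Fin N)) ∉ P := fun h =>
      ha (Finset.mem_sup.2 ⟨{a}, h, Finset.mem_singleton_self a⟩)
    have hcards : (insert ({a} : Finset (Fin N)) P).card = P.card + 1 :=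
      Finset.card_insert_of_notMem hnot
    have hsupc : ((insert ({a} : Finset (Fin N)) P).sup id).card = (P.sup id).card + 1 := by
      rw [sup_ins, Finset.card_insert_of_notMem ha]
    have hlt : P.card < k := by
      have hne : P.sup id ≠ Finset.univ := fun h => ha (h ▸ Finset.mem_univ a)
      have := Finset.card_lt_card (Finset.ssubset_univ_iff.2 hne)
      rw [Finset.card_univ, Fintype.card_fin] at this
      omega
    refine ⟨?_, ?_, ?_, ?_, ?_⟩
    · intro b hb
      rcases Finset.mem_insert.1 hb with rfl | hb
      · simpa using odd_one
      · exact hodd b hb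
    · rw [Finset.coe_insert]
      refine Set.pairwiseDisjoint_insert.2 ⟨hpd, fun b hb _ => ?_⟩
      simp only [id]
      rw [Finset.disjoint_left]
      intro x hx hxb
      rw [Finset.mem_singleton] at hx
      subst hx
      exact ha (Finset.mem_sup.2 ⟨b, Finset.mem_coe.1 hb, hxb⟩)
    · rw [hsupc, hcards, hsc]; ring
    · omega
    · omega
  have erS : ∀ P ∈ S, ∀ a : Fin N, ({a} : Finset (Fin N)) ∈ P →
      (a ∉ (P.erase {a}).sup id ∧ P.erase {a} ∈ S) := by
    intro P hP a haP
    rw [memS] at hP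
    obtain ⟨hodd, hpd, hsc, hc1, hck⟩ := hP
    have hnotsup : a ∉ (P.erase {a}).sup id := by
      intro h
      rw [Finset.mem_sup] at h
      obtain ⟨b, hb, hab⟩ := h
      obtain ⟨hbne, hbP⟩ := Finset.mem_erase.1 hb
      have hd := hpd (Finset.mem_coe.2 hbP) (Finset.mem_coe.2 haP) hbne
      simp only [Function.onFun, id] at hd
      exact Finset.disjoint_singleton_right.1 hd hab
    have hPeq : insert ({a} : Finset (Fin N)) (P.erase {a}) = P := Finset.insert_erase haP
    have hsupP : P.sup id = insert a ((P.erase {a}).sup id) := by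
      conv_lhs => rw [← hPeq]
      exact sup_ins _ a
    have hsupc : (P.sup id).card = ((P.erase {a}).sup id).card + 1 := by
      rw [hsupP, Finset.card_insert_of_notMem hnotsup]
    have hce : (P.erase {a}).card = P.card - 1 := Finset.card_erase_of_mem haP
    have h2card : 2 ≤ P.card := by
      by_contra hlt
      have hc1' : P.card = 1 := by omega
      obtain ⟨b, hb⟩ := Finset.card_eq_one.1 hc1'
      have hba : b = ({a} : Finset (Fin N)) := by
        rw [hb, Finset.mem_singleton] at haP; exact haP.symm
      rw [hb, hba] at hsc
      simp at hsc
      omega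
    refine ⟨hnotsup, ?_⟩
    rw [memS]
    refine ⟨fun b hb => hodd b (Finset.mem_of_mem_erase hb),
      hpd.subset (Finset.coe_subset.2 (Finset.erase_subset _ _)), ?_, ?_, ?_⟩ <;> omega
  have cand_ins : ∀ (P : Finset (Finset (Fin N))) (a : Fin N), a ∉ P.sup id →
      cand (insert ({a} : Finset (Fin N)) P) = cand P := by
    intro P a ha
    ext x
    rw [mem_cand, mem_cand, sup_ins]
    simp only [Finset.mem_insert, Finset.singleton_inj]
    by_cases hxa : x = a
    · subst hxa
      simp [ha]
    · simp only [hxa, false_or]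
  have cand_er : ∀ (P : Finset (Finset (Fin N))) (a : Fin N),
      ({a} : Finset (Fin N)) ∈ P → a ∉ (P.erase {a}).sup id →
      cand (P.erase {a}) = cand P := by
    intro P a haP hnotsup
    conv_rhs => rw [← Finset.insert_erase haP]
    rw [cand_ins _ a hnotsup]
  have min'_congr : ∀ (s t : Finset (Fin N)) (hs : s.Nonempty) (ht : t.Nonempty),
      s = t → s.min' hs = t.min' ht := by
    rintro s t hs ht rfl; rfl
  set g : Finset (Finset (Fin N)) → Finset (Finset (Fin N)) := fun P =>
    if h : (cand P).Nonempty then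
      (if ({(cand P).min' h} : Finset (Fin N)) ∈ P then P.erase {(cand P).min' h}
       else insert ({(cand P).min' h} : Finset (Fin N)) P)
    else P with hg
  have gfacts : ∀ P ∈ S, g P ∈ S ∧ g (g P) = P ∧
      ((g P).card = P.card + 1 ∨ P.card = (g P).card + 1) := by
    intro P hP
    have hne := cand_ne P hP
    set a := (cand P).min' hne with ha
    by_cases hm : ({a} : Finset (Fin N)) ∈ P
    · -- erase case
      have hgP : g P = P.erase {a} := by
        simp only [hg]
        rw [dif_pos hne, ← ha, if_pos hm]
      obtain ⟨hnotsup, hgS⟩ := erS P hP a hm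
      refine ⟨by rw [hgP]; exact hgS, ?_, ?_⟩
      · rw [hgP]
        have hcandeq : cand (P.erase {a}) = cand P := cand_er P a hm hnotsup
        have hne' : (cand (P.erase {a})).Nonempty := by rw [hcandeq]; exact hne
        have hmin : (cand (P.erase {a})).min' hne' = a :=
          (min'_congr _ _ hne' hne hcandeq).trans ha.symm
        simp only [hg]
        rw [dif_pos hne', hmin, if_neg (Finset.notMem_erase _ _)]
        exact Finset.insert_erase hm
      · right
        rw [hgP, Finset.card_erase_of_mem hm]
        have := ((memS P).1 hP).2.2.2.1
        omega
    · -- insert case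
      have hnotsup : a ∉ P.sup id := by
        have hmem := Finset.min'_mem (cand P) hne
        rw [← ha, mem_cand] at hmem
        exact hmem.resolve_right hm
      have hgP : g P = insert ({a} : Finset (Fin N)) P := by
        simp only [hg]
        rw [dif_pos hne, ← ha, if_neg hm]
      refine ⟨by rw [hgP]; exact insS P hP a hnotsup, ?_, ?_⟩
      · rw [hgP]
        have hcandeq : cand (insert ({a} : Finset (Fin N)) P) = cand P := cand_ins P a hnotsup
        have hne' : (cand (insert ({a} : Finset (Fin N)) P)).Nonempty := by
          rw [hcandeq]; exact hne
        have hmin : (cand (insert ({a} : Finset (Fin N)) P)).min' hne' = a :=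
          (min'_congr _ _ hne' hne hcandeq).trans ha.symm
        simp only [hg]
        rw [dif_pos hne', hmin, if_pos (Finset.mem_insert_self _ _)]
        exact Finset.erase_insert hm
      · left
        rw [hgP, Finset.card_insert_of_notMem hm]
  refine Finset.sum_involution (fun P _ => g P) ?_ ?_ (fun P hP => (gfacts P hP).1) ?_
  · intro P hP
    obtain ⟨hgS, -, hcard⟩ := gfacts P hP
    have hk1 : P.card ≤ k := ((memS P).1 hP).2.2.2.2
    have hk2 : (g P).card ≤ k := ((memS (g P)).1 hgS).2.2.2.2
    rcases hcard with h | h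
    · have he : k - P.card = (k - (g P).card) + 1 := by omega
      rw [he, pow_succ]
      ring
    · have he : k - (g P).card = (k - P.card) + 1 := by omega
      rw [he, pow_succ]
      ring
  · intro P hP _ hgP
    obtain ⟨-, -, hcard⟩ := gfacts P hP
    have hgP' : g P = P := hgP
    rw [hgP'] at hcard
    omega
  · intro P hP
    exact (gfacts P hP).2.1
end

section
/- For every ℓ ∈ ℕ₀, the ℓ-th power of the sinc function has the power series expansion sinc^ℓ(z) = 1 + ∑_{j=1}^{∞} (-1)^j [T(ℓ+2j, ℓ) / C(ℓ+2j, ℓ)] (2z)^{2j} / (2j)!, valid for all z ∈ ℂ. -/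
open scoped Classical BigOperators Nat

open Finset in
lemma diff_step (ℓ : ℕ) (g : ℕ → ℝ) :
    ∑ k ∈ Finset.range (ℓ+2), (-1:ℝ)^k * ((ℓ+1).choose k) * g k
      = ∑ k ∈ Finset.range (ℓ+1), (-1:ℝ)^k * (ℓ.choose k) * (g k - g (k+1)) := by
  have h1 : ∑ k ∈ Finset.range (ℓ+2), (-1:ℝ)^k * ((ℓ+1).choose k) * g k
      = (∑ k ∈ Finset.range (ℓ+1),
          ((-1:ℝ)^(k+1) * (ℓ.choose k) * g (k+1) + (-1:ℝ)^(k+1) * (ℓ.choose (k+1)) * g (k+1)))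
        + g 0 := by
    rw [Finset.sum_range_succ' _ (ℓ+1)]
    simp only [Nat.choose_succ_succ, Nat.cast_add, pow_zero, Nat.choose_zero_right, Nat.cast_one,
      one_mul]
    congr 1
    apply Finset.sum_congr rfl; intro k _; push_cast; ring
  have h2 : ∑ k ∈ Finset.range (ℓ+1), (-1:ℝ)^(k+1) * (ℓ.choose (k+1)) * g (k+1) + g 0
      = ∑ k ∈ Finset.range (ℓ+1), (-1:ℝ)^k * (ℓ.choose k) * g k := by
    rw [Finset.sum_range_succ' (fun k => (-1:ℝ)^k * (ℓ.choose k) * g k) ℓ]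
    rw [Finset.sum_range_succ]
    simp
  rw [h1, Finset.sum_add_distrib, add_assoc, h2]
  rw [← Finset.sum_add_distrib]
  apply Finset.sum_congr rfl
  intro k _
  ring

lemma key (ℓ : ℕ) : ∀ n ≤ ℓ, ∀ x : ℝ,
    ∑ k ∈ Finset.range (ℓ+1), (-1:ℝ)^k * (ℓ.choose k) * (x - k)^n
      = if n = ℓ then (ℓ ! : ℝ) else 0 := by
  induction ℓ with
  | zero =>
    intro n hn x
    interval_cases n
    simp
  | succ ℓ IH =>
    intro n hn x
    rw [show ℓ + 1 + 1 = ℓ + 2 from rfl, diff_step ℓ (fun k => (x - k)^n)]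
    have hterm : ∀ k : ℕ, (x - k)^n - (x - ((k:ℕ)+1:ℕ))^n
        = ∑ m ∈ Finset.range n, ((x-1) - k)^m * (n.choose m) := by
      intro k
      have e1 : x - ((k:ℕ)+1:ℕ) = x - 1 - k := by push_cast; ring
      have e2 : x - (k:ℝ) = (x - 1 - (k:ℝ)) + 1 := by ring
      rw [e1, e2, add_pow, Finset.sum_range_succ]
      simp
    calc ∑ k ∈ Finset.range (ℓ+1), (-1:ℝ)^k * (ℓ.choose k) * ((x - k)^n - (x - ((k:ℕ)+1:ℕ))^n)
        = ∑ k ∈ Finset.range (ℓ+1), ∑ m ∈ Finset.range n,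
            (n.choose m : ℝ) * ((-1:ℝ)^k * (ℓ.choose k) * ((x-1) - k)^m) := by
          apply Finset.sum_congr rfl; intro k _
          rw [hterm k, Finset.mul_sum]
          apply Finset.sum_congr rfl; intro m _; ring
      _ = ∑ m ∈ Finset.range n, (n.choose m : ℝ) *
            ∑ k ∈ Finset.range (ℓ+1), (-1:ℝ)^k * (ℓ.choose k) * ((x-1) - k)^m := by
          rw [Finset.sum_comm]
          exact Finset.sum_congr rfl fun m _ => (Finset.mul_sum _ _ _).symm
      _ = ∑ m ∈ Finset.range n, (n.choose m : ℝ) * (if m = ℓ then (ℓ ! : ℝ) else 0) := by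
          apply Finset.sum_congr rfl; intro m hm
          rw [IH m (by have := Finset.mem_range.mp hm; omega) (x-1)]
      _ = if n = ℓ + 1 then ((ℓ+1)! : ℝ) else 0 := by
          simp only [mul_ite, mul_zero]
          rw [Finset.sum_ite_eq' (Finset.range n) ℓ (fun m => (n.choose m : ℝ) * (ℓ ! : ℝ))]
          by_cases hcase : n = ℓ + 1
          · subst hcase
            rw [if_pos (Finset.self_mem_range_succ ℓ), if_pos rfl,
              Nat.choose_succ_self_right, Nat.factorial_succ]
            push_cast; ring
          · have h3 : ℓ ∉ Finset.range n := by
              simp only [Finset.mem_range]; omega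
            rw [if_neg h3, if_neg hcase]

open Finset in
lemma parity_lem (n ℓ : ℕ) (h : ¬ Even (n + ℓ)) :
    ∑ k ∈ Finset.range (ℓ+1), (-1:ℝ)^k * (ℓ.choose k) * ((ℓ:ℝ)/2 - k)^n = 0 := by
  set f : ℕ → ℝ := fun k => (-1:ℝ)^k * (ℓ.choose k) * ((ℓ:ℝ)/2 - k)^n with hf
  have hrefl : ∑ k ∈ Finset.range (ℓ+1), f (ℓ + 1 - 1 - k) = ∑ k ∈ Finset.range (ℓ+1), f k :=
    Finset.sum_range_reflect f (ℓ+1)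
  have hneg : ∀ k ∈ Finset.range (ℓ+1), f (ℓ + 1 - 1 - k) = -f k := by
    intro k hk
    have hkℓ : k ≤ ℓ := by simpa [Nat.lt_succ_iff] using hk
    obtain ⟨d, rfl⟩ := Nat.exists_eq_add_of_le hkℓ
    have hodd : Odd (n + (k + d)) := Nat.not_even_iff_odd.mp h
    have hA : ((-1:ℝ))^(n + (k + d)) = -1 := Odd.neg_one_pow hodd
    rw [pow_add, pow_add] at hA
    have hB : ((-1:ℝ))^k * (-1:ℝ)^k = 1 := by
      rw [← pow_add]; exact Even.neg_one_pow ⟨k, rfl⟩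
    simp only [hf]
    have e1 : k + d + 1 - 1 - k = d := by omega
    rw [e1]
    have e2 : (k+d).choose d = (k+d).choose k := by
      rw [Nat.add_comm k d, Nat.choose_symm_add, Nat.add_comm d k]
    rw [e2]
    have e3 : ((k + d : ℕ) : ℝ) / 2 - (d : ℝ) = -(((k + d : ℕ) : ℝ) / 2 - (k : ℝ)) := by
      push_cast; ring
    rw [e3, neg_pow ((((k:ℕ) + d : ℕ) : ℝ) / 2 - (k : ℝ)) n]
    have h4 : ((-1:ℝ))^d * (-1:ℝ)^n = -(-1:ℝ)^k := by
      linear_combination (-1:ℝ)^k * hA - (-1:ℝ)^d * (-1:ℝ)^n * hB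
    linear_combination (((k+d).choose k : ℝ) * (((k + d : ℕ) : ℝ) / 2 - (k : ℝ))^n) * h4
  have : ∑ k ∈ Finset.range (ℓ+1), f k = -∑ k ∈ Finset.range (ℓ+1), f k := by
    calc ∑ k ∈ Finset.range (ℓ+1), f k = ∑ k ∈ Finset.range (ℓ+1), f (ℓ + 1 - 1 - k) := hrefl.symm
      _ = ∑ k ∈ Finset.range (ℓ+1), -f k := Finset.sum_congr rfl hneg
      _ = -∑ k ∈ Finset.range (ℓ+1), f k := by rw [Finset.sum_neg_distrib]
  linarith

noncomputable def Sr (ℓ n : ℕ) : ℝ :=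
  ∑ k ∈ Finset.range (ℓ+1), (-1:ℝ)^k * (ℓ.choose k) * ((ℓ:ℝ)/2 - k)^n

lemma main_hasSum (ℓ : ℕ) (z : ℂ) :
    HasSum (fun n : ℕ => (Complex.I/2)^ℓ * Complex.I^n * (-2:ℂ)^n * ((Sr ℓ n : ℝ) : ℂ)
        * z^n / n !) (Complex.sin z ^ ℓ) := by
  set w : ℕ → ℂ := fun k => ((2*(k:ℂ)) - (ℓ:ℂ)) * (z * Complex.I) with hw
  set c : ℕ → ℂ := fun k => (Complex.I/2)^ℓ * ((-1:ℂ)^k * (ℓ.choose k : ℂ)) with hc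
  -- step A : sin z ^ ℓ as finite combination of exponentials
  have hsin : Complex.sin z ^ ℓ = ∑ k ∈ Finset.range (ℓ+1), c k * Complex.exp (w k) := by
    have h0 : Complex.sin z = (Complex.exp (-z * Complex.I) - Complex.exp (z * Complex.I))
        * Complex.I / 2 := rfl
    have h1 : Complex.sin z ^ ℓ
        = (-Complex.exp (z * Complex.I) + Complex.exp (-z * Complex.I))^ℓ * (Complex.I/2)^ℓ := by
      rw [h0]; rw [← mul_pow]; congr 1; ring
    rw [h1, add_pow, Finset.sum_mul]
    apply Finset.sum_congr rfl
    intro k hk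
    have hkℓ : k ≤ ℓ := by simpa [Nat.lt_succ_iff] using hk
    have e1 : (-Complex.exp (z * Complex.I))^k = (-1:ℂ)^k * Complex.exp ((k:ℂ) * (z*Complex.I)) := by
      rw [neg_pow, Complex.exp_nat_mul]
    have e2 : Complex.exp (-z * Complex.I)^(ℓ-k) = Complex.exp (((ℓ-k:ℕ):ℂ) * (-(z*Complex.I))) := by
      rw [Complex.exp_nat_mul]; congr 1; ring
    have e3 : (k:ℂ) * (z*Complex.I) + ((ℓ-k:ℕ):ℂ) * (-(z*Complex.I)) = w k := by
      rw [Nat.cast_sub hkℓ]; simp only [hw]; ring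
    rw [e1, e2, mul_assoc ((-1:ℂ)^k), ← Complex.exp_add, e3, hc]
    ring
  -- step A' : HasSum
  have hA : HasSum (fun n : ℕ => ∑ k ∈ Finset.range (ℓ+1), c k * (w k ^ n / n !))
      (Complex.sin z ^ ℓ) := by
    rw [hsin]
    apply hasSum_sum
    intro k _
    have := (NormedSpace.expSeries_div_hasSum_exp (w k)).mul_left (c k)
    rw [← Complex.exp_eq_exp_ℂ] at this
    exact this
  -- step B : pointwise identification
  have hB : ∀ n : ℕ, ∑ k ∈ Finset.range (ℓ+1), c k * (w k ^ n / n !)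
      = (Complex.I/2)^ℓ * Complex.I^n * (-2:ℂ)^n * ((Sr ℓ n : ℝ) : ℂ) * z^n / n ! := by
    intro n
    have hcast : ((Sr ℓ n : ℝ) : ℂ)
        = ∑ k ∈ Finset.range (ℓ+1), (-1:ℂ)^k * (ℓ.choose k : ℂ) * ((ℓ:ℂ)/2 - k)^n := by
      rw [Sr]; push_cast; rfl
    calc ∑ k ∈ Finset.range (ℓ+1), c k * (w k ^ n / n !)
        = ∑ k ∈ Finset.range (ℓ+1), (Complex.I/2)^ℓ * Complex.I^n * (-2:ℂ)^n
            * ((-1:ℂ)^k * (ℓ.choose k : ℂ) * ((ℓ:ℂ)/2 - k)^n) * z^n / n ! := by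
          apply Finset.sum_congr rfl
          intro k _
          have hwk : w k ^ n = (-2:ℂ)^n * ((ℓ:ℂ)/2 - (k:ℂ))^n * (z^n * Complex.I^n) := by
            rw [show w k = (-2:ℂ) * ((ℓ:ℂ)/2 - (k:ℂ)) * (z * Complex.I) from by
              simp only [hw]; ring, mul_pow, mul_pow, mul_pow]
          rw [hwk, hc]
          ring
      _ = (Complex.I/2)^ℓ * Complex.I^n * (-2:ℂ)^n * ((Sr ℓ n : ℝ) : ℂ) * z^n / n ! := by
          rw [hcast, ← Finset.sum_div, ← Finset.sum_mul, ← Finset.mul_sum]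
  have := funext hB
  exact this ▸ hA

lemma centralT_eq (n ℓ : ℕ) : centralT n ℓ = (1 / (ℓ ! : ℝ)) * Sr ℓ n := rfl

lemma Sr_self (ℓ : ℕ) : Sr ℓ ℓ = (ℓ ! : ℝ) := by
  rw [Sr]
  rw [key ℓ ℓ le_rfl ((ℓ:ℝ)/2)]
  simp

lemma centralT_self (ℓ : ℕ) : centralT ℓ ℓ = 1 := by
  rw [centralT_eq, Sr_self]
  field_simp

theorem stmt12 (ℓ : ℕ) (z : ℂ) :
    HasSum (fun j : ℕ =>
      (-1 : ℂ) ^ j * ((centralT (ℓ + 2 * j) ℓ : ℝ) : ℂ) / ((ℓ + 2 * j).choose ℓ) *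
        (2 * z) ^ (2 * j) / ((2 * j)!))
      (sinc z ^ ℓ) := by
  set f : ℕ → ℂ := fun j =>
      (-1 : ℂ) ^ j * ((centralT (ℓ + 2 * j) ℓ : ℝ) : ℂ) / ((ℓ + 2 * j).choose ℓ) *
        (2 * z) ^ (2 * j) / ((2 * j)!) with hf
  by_cases hz : z = 0
  · subst hz
    have h1 : ∀ j : ℕ, j ≠ 0 → f j = 0 := by
      intro j hj
      simp only [hf]
      rw [mul_zero, zero_pow (by positivity : 2 * j ≠ 0)]
      simp
    have h0 : f 0 = 1 := by
      simp only [hf]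
      norm_num [centralT_self]
    have := hasSum_single (f := f) 0 (by intro b hb; exact h1 b hb)
    rw [h0] at this
    have hs : sinc 0 ^ ℓ = 1 := by rw [sinc]; simp
    rwa [hs]
  -- main case
  · have he : Function.Injective (fun j : ℕ => ℓ + 2 * j) := by
      intro a b hab
      simp only at hab
      omega
    set F : ℕ → ℂ := fun n => (Complex.I/2)^ℓ * Complex.I^n * (-2:ℂ)^n * ((Sr ℓ n : ℝ) : ℂ)
        * z^n / n ! with hFdef
    have hF0 : ∀ n ∉ Set.range (fun j : ℕ => ℓ + 2 * j), F n = 0 := by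
      intro n hn
      have hSr : Sr ℓ n = 0 := by
        rcases lt_or_ge n ℓ with hlt | hle
        · have := key ℓ n hlt.le ((ℓ:ℝ)/2)
          rw [if_neg hlt.ne] at this
          exact this
        · apply parity_lem
          intro ⟨m, hm⟩
          exact hn ⟨m - ℓ, by simp only; omega⟩
      simp only [hFdef, hSr]
      simp
    have hcomp : HasSum (F ∘ fun j : ℕ => ℓ + 2 * j) (Complex.sin z ^ ℓ) :=
      (he.hasSum_iff hF0).mpr (main_hasSum ℓ z)
    have hEq : ∀ j : ℕ, F (ℓ + 2 * j) = f j * z ^ ℓ := by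
      intro j
      have hfact : ((ℓ + 2 * j)! : ℂ) = ((ℓ + 2 * j).choose ℓ : ℂ) * (ℓ ! : ℂ) * ((2*j)! : ℂ) := by
        have h := Nat.choose_mul_factorial_mul_factorial (Nat.le_add_right ℓ (2*j))
        rw [Nat.add_sub_cancel_left] at h
        exact_mod_cast h.symm
      have hsign : (Complex.I/2)^ℓ * Complex.I^(ℓ + 2*j) * (-2:ℂ)^(ℓ + 2*j)
          = (-1:ℂ)^j * 4^j := by
        rw [pow_add, pow_add, pow_mul, pow_mul, Complex.I_sq]
        rw [show ((-2:ℂ))^2 = 4 by norm_num]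
        rw [show (Complex.I/2)^ℓ * (Complex.I^ℓ * (-1:ℂ)^j) * ((-2:ℂ)^ℓ * (4:ℂ)^j)
            = ((Complex.I/2) * Complex.I * (-2))^ℓ * ((-1:ℂ)^j * 4^j) by
          rw [mul_pow, mul_pow]; ring]
        rw [show (Complex.I/2) * Complex.I * (-2) = -(Complex.I*Complex.I) by ring,
          Complex.I_mul_I]
        norm_num
      have hT : ((Sr ℓ (ℓ + 2*j) : ℝ) : ℂ) = (ℓ ! : ℂ) * ((centralT (ℓ + 2*j) ℓ : ℝ) : ℂ) := by
        rw [centralT_eq]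
        push_cast
        have hl0 : (ℓ ! : ℂ) ≠ 0 := by exact_mod_cast ℓ.factorial_ne_zero
        field_simp
      simp only [hFdef, hf]
      rw [hT, hsign, hfact]
      have hc0 : ((ℓ + 2*j).choose ℓ : ℂ) ≠ 0 := by
        exact_mod_cast (Nat.choose_pos (Nat.le_add_right ℓ (2*j))).ne'
      have hl0 : (ℓ ! : ℂ) ≠ 0 := by exact_mod_cast ℓ.factorial_ne_zero
      have hj0 : ((2*j)! : ℂ) ≠ 0 := by exact_mod_cast (2*j).factorial_ne_zero
      have h2z : (2*z)^(2*j) = (4:ℂ)^j * z^(2*j) := by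
        rw [mul_pow, pow_mul]; norm_num
      rw [h2z, pow_add]
      field_simp
    have := (funext hEq : F ∘ (fun j : ℕ => ℓ + 2 * j) = fun j => f j * z ^ ℓ) ▸ hcomp
    have h2 := this.mul_right ((z : ℂ)^ℓ)⁻¹
    have hzl : (z : ℂ)^ℓ ≠ 0 := pow_ne_zero ℓ hz
    have h3 : (fun j => f j * z ^ ℓ * ((z:ℂ)^ℓ)⁻¹) = f := by
      funext j
      rw [mul_assoc, mul_inv_cancel₀ hzl, mul_one]
    rw [h3] at h2
    have h4 : sinc z ^ ℓ = Complex.sin z ^ ℓ * ((z:ℂ)^ℓ)⁻¹ := by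
      rw [sinc, if_neg hz, div_pow, div_eq_mul_inv]
    rwa [h4]
end

section
/- For every ℓ ∈ ℕ₀, the ℓ-th power of the hyperbolic sinc function has the power series expansion sinhc^ℓ(z) = 1 + ∑_{j=1}^{∞} [T(2j+ℓ, ℓ) / C(2j+ℓ, ℓ)] (2z)^{2j} / (2j)!, valid for all z ∈ ℂ. -/
open scoped Classical BigOperators Nat

noncomputable def altS (ℓ : ℕ) (f : ℕ → ℝ) : ℝ :=
  ∑ j ∈ Finset.range (ℓ + 1), (-1 : ℝ) ^ j * (ℓ.choose j) * f j

lemma altS_succ (ℓ : ℕ) (f : ℕ → ℝ) :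
    altS (ℓ + 1) f = altS ℓ (fun j => f j - f (j + 1)) := by
  unfold altS
  rw [Finset.sum_range_succ']
  have h1 : ∀ i ∈ Finset.range (ℓ + 1), (-1 : ℝ) ^ (i + 1) * ((ℓ + 1).choose (i + 1)) * f (i + 1)
      = (-1) ^ (i + 1) * (ℓ.choose i) * f (i + 1) + (-1) ^ (i + 1) * (ℓ.choose (i + 1)) * f (i + 1) := by
    intro i _
    rw [Nat.choose_succ_succ]
    push_cast
    ring
  rw [Finset.sum_congr rfl h1, Finset.sum_add_distrib]
  have h2 : ∑ i ∈ Finset.range (ℓ + 1), (-1 : ℝ) ^ (i + 1) * (ℓ.choose (i + 1)) * f (i + 1)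
      = (∑ j ∈ Finset.range (ℓ + 1), (-1 : ℝ) ^ j * (ℓ.choose j) * f j)
        - (-1 : ℝ) ^ 0 * (ℓ.choose 0) * f 0 := by
    rw [Finset.sum_range_succ' (fun j => (-1 : ℝ) ^ j * (ℓ.choose j) * f j) ℓ]
    rw [Finset.sum_range_succ]
    simp [Nat.choose_succ_self]
  rw [h2]
  have h4 : ∑ j ∈ Finset.range (ℓ + 1), (-1 : ℝ) ^ j * (ℓ.choose j) * ((fun j => f j - f (j + 1)) j)
      = (∑ j ∈ Finset.range (ℓ + 1), (-1 : ℝ) ^ j * (ℓ.choose j) * f j)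
        - ∑ j ∈ Finset.range (ℓ + 1), (-1 : ℝ) ^ j * (ℓ.choose j) * f (j + 1) := by
    rw [← Finset.sum_sub_distrib]
    exact Finset.sum_congr rfl fun i _ => by ring
  rw [h4]
  have h3 : ∑ i ∈ Finset.range (ℓ + 1), (-1 : ℝ) ^ (i + 1) * (ℓ.choose i) * f (i + 1)
      = -∑ i ∈ Finset.range (ℓ + 1), (-1 : ℝ) ^ i * (ℓ.choose i) * f (i + 1) := by
    rw [← Finset.sum_neg_distrib]
    exact Finset.sum_congr rfl fun i _ => by ring
  rw [h3]
  simp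
  ring

lemma altS_sum {ι : Type*} (ℓ : ℕ) (s : Finset ι) (c : ι → ℝ) (g : ι → ℕ → ℝ) :
    altS ℓ (fun j => ∑ k ∈ s, c k * g k j) = ∑ k ∈ s, c k * altS ℓ (g k) := by
  unfold altS
  simp_rw [Finset.mul_sum]
  rw [Finset.sum_comm]
  refine Finset.sum_congr rfl fun k _ => ?_
  exact Finset.sum_congr rfl fun j _ => by ring

lemma pow_sub_succ_pow (n j : ℕ) :
    ((j : ℝ)) ^ n - ((j + 1 : ℕ) : ℝ) ^ n
      = ∑ k ∈ Finset.range n, (-(n.choose k) : ℝ) * (j : ℝ) ^ k := by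
  push_cast
  rw [add_pow, Finset.sum_range_succ]
  simp only [one_pow, Nat.choose_self, Nat.cast_one, mul_one, Nat.sub_self, pow_zero]
  have h : ∑ k ∈ Finset.range n, (-(n.choose k) : ℝ) * (j : ℝ) ^ k
      = -∑ k ∈ Finset.range n, (j:ℝ) ^ k * (n.choose k) := by
    rw [← Finset.sum_neg_distrib]
    exact Finset.sum_congr rfl fun k _ => by ring
  rw [h]
  ring

lemma altS_succ_pow (ℓ n : ℕ) :
    altS (ℓ + 1) (fun j => (j : ℝ) ^ n)
      = ∑ k ∈ Finset.range n, (-(n.choose k) : ℝ) * altS ℓ (fun j => (j : ℝ) ^ k) := by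
  rw [altS_succ, ← altS_sum]
  congr 1
  funext j
  exact pow_sub_succ_pow n j

lemma altS_pow_eq_zero : ∀ ℓ n : ℕ, n < ℓ → altS ℓ (fun j => (j : ℝ) ^ n) = 0 := by
  intro ℓ
  induction ℓ with
  | zero => intro n h; exact absurd h (Nat.not_lt_zero n)
  | succ ℓ ih =>
    intro n hn
    rw [altS_succ_pow]
    refine Finset.sum_eq_zero fun k hk => ?_
    rw [ih k (by simp at hk; omega), mul_zero]

lemma altS_pow_self (ℓ : ℕ) : altS ℓ (fun j => (j : ℝ) ^ ℓ) = (-1) ^ ℓ * ℓ ! := by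
  induction ℓ with
  | zero => simp [altS]
  | succ ℓ ih =>
    rw [altS_succ_pow, Finset.sum_range_succ]
    rw [Finset.sum_eq_zero fun k hk => by
      rw [altS_pow_eq_zero ℓ k (by simp at hk; omega), mul_zero]]
    rw [ih, Nat.choose_succ_self_right]
    push_cast [Nat.factorial_succ]
    ring

lemma centralT_eq_altS (n ℓ : ℕ) :
    centralT n ℓ = (1 / (ℓ ! : ℝ)) * altS ℓ (fun j => ((ℓ : ℝ) / 2 - j) ^ n) := rfl

lemma altS_shift_pow_expand (ℓ n : ℕ) (a : ℝ) :
    altS ℓ (fun j => (a - j) ^ n)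
      = ∑ k ∈ Finset.range (n + 1),
          (a ^ k * (-1 : ℝ) ^ (n - k) * (n.choose k)) * altS ℓ (fun j => (j : ℝ) ^ (n - k)) := by
  rw [← altS_sum]
  congr 1
  funext j
  rw [show a - (j:ℝ) = a + (-(j:ℝ)) by ring, add_pow]
  exact Finset.sum_congr rfl fun k _ => by rw [neg_pow]; ring

lemma centralT_eq_zero_of_lt {n ℓ : ℕ} (h : n < ℓ) : centralT n ℓ = 0 := by
  rw [centralT_eq_altS, altS_shift_pow_expand]
  rw [Finset.sum_eq_zero fun k _ => by
    rw [altS_pow_eq_zero ℓ (n - k) (by omega), mul_zero]]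
  ring

lemma centralT_eq_zero_of_odd {n ℓ : ℕ} (h : ¬ Even (n + ℓ)) : centralT n ℓ = 0 := by
  have key : ∑ j ∈ Finset.range (ℓ + 1), (-1 : ℝ) ^ j * (ℓ.choose j) * ((ℓ : ℝ) / 2 - j) ^ n
      = (-1 : ℝ) ^ (n + ℓ) * ∑ j ∈ Finset.range (ℓ + 1),
          (-1 : ℝ) ^ j * (ℓ.choose j) * ((ℓ : ℝ) / 2 - j) ^ n := by
    nth_rewrite 1 [← Finset.sum_range_reflect]
    rw [Finset.mul_sum]
    refine Finset.sum_congr rfl fun j hj => ?_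
    have hjl : j ≤ ℓ := by simp at hj; omega
    simp only [Nat.add_sub_cancel]
    rw [Nat.choose_symm hjl]
    have hc : ((ℓ - j : ℕ) : ℝ) = (ℓ : ℝ) - j := by
      push_cast [Nat.cast_sub hjl]; ring
    have hs : (-1 : ℝ) ^ (ℓ - j) = (-1 : ℝ) ^ ℓ * (-1 : ℝ) ^ j := by
      rw [← pow_add, show ℓ + j = (ℓ - j) + 2 * j by omega, pow_add, pow_mul, neg_one_sq,
        one_pow, mul_one]
    rw [hc, hs]
    have hp : ((ℓ : ℝ) / 2 - ((ℓ : ℝ) - j)) ^ n = (-1 : ℝ) ^ n * ((ℓ : ℝ) / 2 - j) ^ n := by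
      rw [show (ℓ : ℝ) / 2 - ((ℓ : ℝ) - j) = -((ℓ : ℝ) / 2 - j) by ring, neg_pow]
    rw [hp, pow_add]
    ring
  have hneg : (-1 : ℝ) ^ (n + ℓ) = -1 := Odd.neg_one_pow (Nat.not_even_iff_odd.mp h)
  rw [hneg] at key
  have : ∑ j ∈ Finset.range (ℓ + 1), (-1 : ℝ) ^ j * (ℓ.choose j) * ((ℓ : ℝ) / 2 - j) ^ n = 0 := by
    linarith
  rw [centralT, this, mul_zero]

lemma reflect_sum (n ℓ : ℕ) :
    ∑ k ∈ Finset.range (ℓ + 1), (-1 : ℝ) ^ (ℓ - k) * (ℓ.choose k) * (2 * (k : ℝ) - ℓ) ^ n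
      = 2 ^ n * ℓ ! * centralT n ℓ := by
  have main : ∑ k ∈ Finset.range (ℓ + 1), (-1 : ℝ) ^ (ℓ - k) * (ℓ.choose k) * (2 * (k : ℝ) - ℓ) ^ n
      = ∑ j ∈ Finset.range (ℓ + 1),
          (2:ℝ) ^ n * ((-1 : ℝ) ^ j * (ℓ.choose j) * ((ℓ : ℝ) / 2 - j) ^ n) := by
    rw [← Finset.sum_range_reflect]
    refine Finset.sum_congr rfl fun j hj => ?_
    have hjl : j ≤ ℓ := by simp at hj; omega
    simp only [Nat.add_sub_cancel]
    rw [Nat.choose_symm hjl, show ℓ - (ℓ - j) = j by omega]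
    have hc : ((ℓ - j : ℕ) : ℝ) = (ℓ : ℝ) - j := by push_cast [Nat.cast_sub hjl]; ring
    rw [hc, show 2 * ((ℓ:ℝ) - j) - ℓ = 2 * ((ℓ:ℝ)/2 - j) by ring, mul_pow]
    ring
  rw [main, centralT, ← Finset.mul_sum]
  have hfac : (ℓ ! : ℝ) ≠ 0 := Nat.cast_ne_zero.mpr (Nat.factorial_ne_zero ℓ)
  field_simp

lemma sinh_pow_hasSum (ℓ : ℕ) (z : ℂ) :
    HasSum (fun n : ℕ => ((2 ^ n * ℓ ! * centralT n ℓ : ℝ) : ℂ) / 2 ^ ℓ * z ^ n / n !)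
      (Complex.sinh z ^ ℓ) := by
  set w : ℕ → ℂ := fun k => (2 * (k : ℂ) - ℓ) * z with hw
  set c : ℕ → ℂ := fun k => (-1 : ℂ) ^ (ℓ - k) * (ℓ.choose k) / 2 ^ ℓ with hc
  have hk : ∀ k ∈ Finset.range (ℓ + 1),
      HasSum (fun n : ℕ => c k * (w k ^ n / n !)) (c k * Complex.exp (w k)) := by
    intro k _
    refine HasSum.mul_left (c k) ?_
    have := NormedSpace.expSeries_div_hasSum_exp (w k)
    rwa [← Complex.exp_eq_exp_ℂ] at this
  have total := hasSum_sum hk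
  have hval : ∑ k ∈ Finset.range (ℓ + 1), c k * Complex.exp (w k) = Complex.sinh z ^ ℓ := by
    rw [show Complex.sinh z = (Complex.exp z - Complex.exp (-z)) / 2 from rfl,
      div_pow, sub_eq_add_neg, add_pow, Finset.sum_div]
    refine Finset.sum_congr rfl fun k hk' => ?_
    have hkl : k ≤ ℓ := by simp at hk'; omega
    have hcast : ((ℓ - k : ℕ) : ℂ) = (ℓ : ℂ) - k := by push_cast [Nat.cast_sub hkl]; ring
    rw [show Complex.exp z ^ k * (-Complex.exp (-z)) ^ (ℓ - k) * ((ℓ.choose k : ℕ) : ℂ) / 2 ^ ℓ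
        = (-1 : ℂ) ^ (ℓ - k) * (ℓ.choose k) *
            (Complex.exp z ^ k * Complex.exp (-z) ^ (ℓ - k)) / 2 ^ ℓ by rw [neg_pow]; ring]
    rw [← Complex.exp_nat_mul z k, ← Complex.exp_nat_mul (-z) (ℓ - k), ← Complex.exp_add]
    rw [show (k : ℂ) * z + ((ℓ - k : ℕ) : ℂ) * (-z) = (2 * (k : ℂ) - ℓ) * z by rw [hcast]; ring]
    simp only [hc, hw]
    ring
  rw [hval] at total
  refine total.congr_fun fun n => ?_
  have rc : ((2 ^ n * ℓ ! * centralT n ℓ : ℝ) : ℂ)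
      = ∑ k ∈ Finset.range (ℓ + 1),
          (-1 : ℂ) ^ (ℓ - k) * (ℓ.choose k) * (2 * (k : ℂ) - ℓ) ^ n := by
    rw [← reflect_sum n ℓ]
    push_cast
    rfl
  rw [rc, Finset.sum_div, Finset.sum_mul, Finset.sum_div]
  refine Finset.sum_congr rfl fun k _ => ?_
  simp only [hc, hw]
  rw [mul_pow]
  ring

theorem stmt13 (ℓ : ℕ) (z : ℂ) :
    HasSum (fun j : ℕ =>
      ((centralT (2 * j + ℓ) ℓ : ℝ) : ℂ) / ((2 * j + ℓ).choose ℓ) *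
        (2 * z) ^ (2 * j) / ((2 * j)!))
      (sinhc z ^ ℓ) := by
  by_cases hz : z = 0
  · subst hz
    rw [show sinhc 0 = 1 from if_pos rfl, one_pow]
    have key := hasSum_single (f := fun j : ℕ =>
      ((centralT (2 * j + ℓ) ℓ : ℝ) : ℂ) / ((2 * j + ℓ).choose ℓ) *
        (2 * (0:ℂ)) ^ (2 * j) / ((2 * j)!)) 0 (fun j hj => by
      have h2 : (2 * (0:ℂ)) ^ (2 * j) = 0 := by
        rw [mul_zero, zero_pow (by omega)]
      simp [h2, hj])
    convert key using 1
    simp [centralT_self]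
  · have H := (sinh_pow_hasSum ℓ z).div_const (z ^ ℓ)
    have hsc : Complex.sinh z ^ ℓ / z ^ ℓ = sinhc z ^ ℓ := by
      rw [sinhc, if_neg hz, div_pow]
    rw [hsc] at H
    have hg : Function.Injective (fun j : ℕ => 2 * j + ℓ) := fun a b h => by
      simp only [] at h; omega
    have hvanish : ∀ n ∉ Set.range (fun j : ℕ => 2 * j + ℓ),
        ((2 ^ n * ℓ ! * centralT n ℓ : ℝ) : ℂ) / 2 ^ ℓ * z ^ n / n ! / z ^ ℓ = 0 := by
      intro n hn
      have hT : centralT n ℓ = 0 := by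
        by_cases hlt : n < ℓ
        · exact centralT_eq_zero_of_lt hlt
        · refine centralT_eq_zero_of_odd fun hev => ?_
          obtain ⟨t, ht⟩ := hev
          exact hn ⟨(n - ℓ) / 2, show 2 * ((n - ℓ) / 2) + ℓ = n by omega⟩
      rw [hT]
      simp
    have H2 := (Function.Injective.hasSum_iff hg hvanish).mpr H
    refine H2.congr_fun fun j => ?_
    have hle : ℓ ≤ 2 * j + ℓ := by omega
    have hchoose : (((2 * j + ℓ).choose ℓ) * ℓ ! * (2 * j)! : ℕ) = (2 * j + ℓ)! := by
      have := Nat.choose_mul_factorial_mul_factorial hle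
      simpa [show 2 * j + ℓ - ℓ = 2 * j by omega] using this
    have hcne : (((2 * j + ℓ).choose ℓ : ℕ) : ℂ) ≠ 0 := by
      exact_mod_cast Nat.cast_ne_zero.mpr (Nat.choose_pos hle).ne'
    have hfne : (((2 * j)! : ℕ) : ℂ) ≠ 0 := Nat.cast_ne_zero.mpr (Nat.factorial_ne_zero _)
    have hfne2 : (((2 * j + ℓ)! : ℕ) : ℂ) ≠ 0 := Nat.cast_ne_zero.mpr (Nat.factorial_ne_zero _)
    have hzne : z ^ ℓ ≠ 0 := pow_ne_zero ℓ hz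
    have h2ne : (2 : ℂ) ^ ℓ ≠ 0 := pow_ne_zero ℓ two_ne_zero
    simp only [Function.comp]
    push_cast
    rw [pow_add, pow_add, mul_pow]
    have hc2 : (((2 * j + ℓ)! : ℕ) : ℂ)
        = (((2 * j + ℓ).choose ℓ : ℕ) : ℂ) * ((ℓ ! : ℕ) : ℂ) * (((2 * j)! : ℕ) : ℂ) := by
      exact_mod_cast hchoose.symm
    field_simp
    rw [hc2]
    ring
end

section
/- For every ℓ ∈ ℕ and all z ∈ ℂ, sinc^ℓ(z) = 1 + ∑_{j=1}^{∞} (-1)^j [∑_{k=0}^{2j} (-1)^k C(2j, k) (2/ℓ)^k S(k+ℓ, ℓ) / C(k+ℓ, ℓ)] (ℓz)^{2j} / (2j)!. -/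
open scoped Classical BigOperators Nat

open Finset

private lemma st_lt : ∀ (n m : ℕ), n < m → stirlingS n m = 0 := by
  intro n
  induction n with
  | zero => intro m h; match m, h with | m+1, _ => rfl
  | succ n ih =>
    intro m h
    match m, h with
    | m+1, h =>
      show (m+1) * stirlingS n (m+1) + stirlingS n m = 0
      rw [ih (m+1) (by omega), ih m (by omega)]
      simp

lemma st_self (n : ℕ) : stirlingS n n = 1 := by
  induction n with
  | zero => rfl
  | succ n ih =>
    show (n+1) * stirlingS n (n+1) + stirlingS n n = 1
    rw [st_lt n (n+1) (by omega), ih]; ring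

lemma st_le (n : ℕ) : ∀ m, stirlingS n m ≤ (m+1)^n := by
  induction n with
  | zero => intro m; match m with
    | 0 => simp [stirlingS]
    | m+1 => show (0:ℕ) ≤ _; positivity
  | succ n ih =>
    intro m
    match m with
    | 0 => show (0:ℕ) ≤ _; positivity
    | m+1 =>
      show (m+1) * stirlingS n (m+1) + stirlingS n m ≤ (m+2)^(n+1)
      calc (m+1) * stirlingS n (m+1) + stirlingS n m
          ≤ (m+1) * (m+2)^n + (m+1)^n :=
            Nat.add_le_add (Nat.mul_le_mul_left _ (ih (m+1))) (ih m)
        _ ≤ (m+1) * (m+2)^n + (m+2)^n := by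
            exact Nat.add_le_add_left (Nat.pow_le_pow_left (by omega) n) _
        _ = (m+2)^(n+1) := by ring

private lemma stirling_explicit (n : ℕ) : ∀ m : ℕ,
    (m ! : ℂ) * (stirlingS n m : ℂ) =
      ∑ j ∈ range (m+1), (-1:ℂ)^j * (m.choose j) * ((m:ℂ) - j)^n := by
  induction n with
  | zero =>
    intro m
    match m with
    | 0 => simp [stirlingS]
    | m+1 =>
      have h := Int.alternating_sum_range_choose_of_ne (n := m+1) (by omega)
      have : ((∑ i ∈ range (m+2), (-1:ℤ)^i * (m+1).choose i : ℤ) : ℂ) = 0 := by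
        rw [h]; simp
      push_cast at this
      rw [show stirlingS 0 (m+1) = 0 from rfl]
      simpa using this.symm
  | succ n ih =>
    intro m
    match m with
    | 0 => simp [show stirlingS (n+1) 0 = 0 from rfl]
    | m+1 =>
      have hL : ((stirlingS (n+1) (m+1) : ℕ) : ℂ) =
          (m+1 : ℂ) * stirlingS n (m+1) + stirlingS n m := by
        rw [show stirlingS (n+1) (m+1) = (m+1) * stirlingS n (m+1) + stirlingS n m from rfl]
        push_cast; ring
      have split : ∑ j ∈ range (m+1+1), (-1:ℂ)^j * ((m+1).choose j) * ((m:ℂ)+1 - j)^(n+1)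
          = (m+1:ℂ) * ∑ j ∈ range (m+1+1), (-1:ℂ)^j * ((m+1).choose j) * ((m:ℂ)+1 - j)^n
            - ∑ j ∈ range (m+1+1), (j:ℂ) * ((-1:ℂ)^j * ((m+1).choose j) * ((m:ℂ)+1 - j)^n) := by
        rw [mul_sum, ← sum_sub_distrib]
        refine sum_congr rfl fun j _ => by ring
      have hS2 : ∑ j ∈ range (m+1+1), (j:ℂ) * ((-1:ℂ)^j * ((m+1).choose j) * ((m:ℂ)+1 - j)^n)
          = -((m+1:ℂ)) * ∑ k ∈ range (m+1), (-1:ℂ)^k * (m.choose k) * ((m:ℂ) - k)^n := by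
        rw [Finset.sum_range_succ']
        simp only [Nat.cast_zero, zero_mul, add_zero]
        rw [neg_mul, mul_sum, ← Finset.sum_neg_distrib]
        refine sum_congr rfl fun k hk => ?_
        have h : ((m+1 : ℕ) * m.choose k : ℂ) = ((m+1).choose (k+1) : ℂ) * (k+1) := by
          exact_mod_cast congrArg (Nat.cast : ℕ → ℂ) (Nat.add_one_mul_choose_eq m k)
        push_cast at h ⊢
        have ha : (↑m + 1 - (↑k + 1) : ℂ) = (↑m - ↑k) := by ring
        rw [ha]
        linear_combination ((-1:ℂ)^k * ((m:ℂ) - k)^n) * h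
      have ihm1 := ih (m+1)
      push_cast at ihm1 hL ⊢
      rw [split, hS2, ← ihm1, ← ih m, hL]
      have hf : (((m+1)! : ℕ) : ℂ) = ((m:ℂ) + 1) * ((m ! : ℕ) : ℂ) := by
        rw [Nat.factorial_succ]; push_cast; ring
      rw [hf]
      ring

private lemma hasSum_exp_complex (w : ℂ) : HasSum (fun n : ℕ => w^n / n !) (Complex.exp w) := by
  rw [Complex.exp_eq_exp_ℂ]
  exact NormedSpace.expSeries_div_hasSum_exp w

lemma hasSum_exp_tail (w : ℂ) (m : ℕ) :
    HasSum (fun k : ℕ => w^(k+m) / (k+m)!)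
      (Complex.exp w - ∑ i ∈ range m, w^i / i !) :=
  (hasSum_nat_add_iff' m).mpr (hasSum_exp_complex w)

lemma hasSum_G (m : ℕ) (hm : 1 ≤ m) (y : ℂ) :
    HasSum (fun k : ℕ => (m ! : ℂ) * stirlingS (k+m) m / (k+m)! * y^(k+m))
      ((Complex.exp y - 1)^m) := by
  have hterm : ∀ j ∈ range (m+1),
      HasSum (fun k : ℕ => (-1:ℂ)^j * (m.choose j) * ((((m:ℂ)-j)*y)^(k+m) / (k+m)!))
        ((-1:ℂ)^j * (m.choose j) *
          (Complex.exp (((m:ℂ)-j)*y) - ∑ i ∈ range m, (((m:ℂ)-j)*y)^i / i !)) :=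
    fun j _ => (hasSum_exp_tail (((m:ℂ)-j)*y) m).mul_left _
  have hsum := hasSum_sum hterm
  have hfun : (fun k : ℕ => ∑ j ∈ range (m+1),
        (-1:ℂ)^j * (m.choose j) * ((((m:ℂ)-j)*y)^(k+m) / (k+m)!))
      = fun k : ℕ => (m ! : ℂ) * stirlingS (k+m) m / (k+m)! * y^(k+m) := by
    funext k
    have : ∀ j ∈ range (m+1),
        (-1:ℂ)^j * (m.choose j) * ((((m:ℂ)-j)*y)^(k+m) / (k+m)!)
          = ((-1:ℂ)^j * (m.choose j) * ((m:ℂ)-j)^(k+m)) * (y^(k+m) / (k+m)!) := by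
      intro j _; rw [mul_pow]; ring
    rw [sum_congr rfl this, ← sum_mul, ← stirling_explicit]
    ring
  have hval : ∑ j ∈ range (m+1), (-1:ℂ)^j * (m.choose j) *
        (Complex.exp (((m:ℂ)-j)*y) - ∑ i ∈ range m, (((m:ℂ)-j)*y)^i / i !)
      = (Complex.exp y - 1)^m := by
    have hsplit : ∑ j ∈ range (m+1), (-1:ℂ)^j * (m.choose j) *
          (Complex.exp (((m:ℂ)-j)*y) - ∑ i ∈ range m, (((m:ℂ)-j)*y)^i / i !)
        = (∑ j ∈ range (m+1), (-1:ℂ)^j * (m.choose j) * Complex.exp (((m:ℂ)-j)*y))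
          - ∑ j ∈ range (m+1), ∑ i ∈ range m,
              (-1:ℂ)^j * (m.choose j) * ((((m:ℂ)-j)*y)^i / i !) := by
      rw [← sum_sub_distrib]
      refine sum_congr rfl fun j _ => by rw [mul_sub, mul_sum]
    have hB : ∑ j ∈ range (m+1), ∑ i ∈ range m,
        (-1:ℂ)^j * (m.choose j) * ((((m:ℂ)-j)*y)^i / i !) = 0 := by
      rw [sum_comm]
      refine sum_eq_zero fun i hi => ?_
      have : ∀ j ∈ range (m+1),
          (-1:ℂ)^j * (m.choose j) * ((((m:ℂ)-j)*y)^i / i !)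
            = ((-1:ℂ)^j * (m.choose j) * ((m:ℂ)-j)^i) * (y^i / i !) := by
        intro j _; rw [mul_pow]; ring
      rw [sum_congr rfl this, ← sum_mul, ← stirling_explicit,
        st_lt i m (mem_range.mp hi)]
      simp
    have hA : ∑ j ∈ range (m+1), (-1:ℂ)^j * (m.choose j) * Complex.exp (((m:ℂ)-j)*y)
        = (Complex.exp y - 1)^m := by
      rw [sub_pow]
      rw [← sum_range_reflect]
      refine sum_congr rfl fun j hj => ?_
      have hjm : j ≤ m := by have := mem_range.mp hj; omega
      have h1 : m + 1 - 1 - j = m - j := by omega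
      have h2 : ((m:ℂ) - ((m - j : ℕ) : ℂ)) = (j : ℂ) := by
        push_cast [Nat.cast_sub hjm]; ring
      have h3 : (-1:ℂ)^(m-j) = (-1)^(j+m) := by
        rw [show j + m = (m - j) + 2*j by omega, pow_add, pow_mul]; simp
      rw [h1, h2, Nat.choose_symm hjm, h3, Complex.exp_nat_mul]
      ring
    rw [hsplit, hB, hA, sub_zero]
  rw [← hfun, ← hval]
  exact hsum

private lemma summable_g (m : ℕ) (y : ℂ) :
    Summable (fun k : ℕ => ‖(m ! : ℂ) * stirlingS (k+m) m / (k+m)! * y^k‖) := by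
  have hsb : Summable (fun k : ℕ => ((m ! : ℝ) * (m+1)^m) * (((m+1 : ℝ)*‖y‖)^k / k !)) :=
    (Real.summable_pow_div_factorial ((m+1 : ℝ)*‖y‖)).mul_left _
  refine Summable.of_nonneg_of_le (fun _ => norm_nonneg _) (fun k => ?_) hsb
  have h1 : ‖(m ! : ℂ) * stirlingS (k+m) m / (k+m)! * y^k‖
      = (m ! : ℝ) * stirlingS (k+m) m / (k+m)! * ‖y‖^k := by
    rw [norm_mul, norm_div, norm_mul, norm_pow]
    push_cast
    simp [Complex.norm_natCast]
  rw [h1]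
  have hst : (stirlingS (k+m) m : ℝ) ≤ ((m+1 : ℝ))^(k+m) := by
    exact_mod_cast Nat.cast_le.mpr (st_le (k+m) m)
  have hfac : (k ! : ℝ) ≤ ((k+m)! : ℝ) := by
    exact_mod_cast Nat.factorial_le (by omega)
  have hk0 : (0:ℝ) < k ! := by positivity
  have hkm0 : (0:ℝ) < ((k+m)! : ℝ) := by positivity
  calc (m ! : ℝ) * stirlingS (k+m) m / (k+m)! * ‖y‖^k
      ≤ (m ! : ℝ) * ((m+1 : ℝ))^(k+m) / (k !) * ‖y‖^k := by
        apply mul_le_mul_of_nonneg_right _ (by positivity)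
        apply div_le_div₀ (by positivity)
          (mul_le_mul_of_nonneg_left hst (by positivity)) hk0 hfac
    _ = ((m ! : ℝ) * (m+1)^m) * (((m+1 : ℝ)*‖y‖)^k / k !) := by
        rw [pow_add, mul_pow]
        field_simp

private lemma term_eq (m n k : ℕ) (hm0 : (m:ℂ) ≠ 0) (hk : k ≤ n) (x : ℂ) :
    (m ! : ℂ) * stirlingS (k+m) m / (k+m)! * (-2*x/m)^k * (x^(n-k) / (n-k)!)
      = ((-1:ℂ)^k * (n.choose k) * (2/(m:ℂ))^k * stirlingS (k+m) m / ((k+m).choose m))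
        * x^n / n ! := by
  have h1 : (((k+m).choose m : ℕ) : ℂ) * (m ! : ℂ) * (k ! : ℂ) = ((k+m)! : ℂ) := by
    exact_mod_cast congrArg (Nat.cast : ℕ → ℂ) (by
      have := Nat.choose_mul_factorial_mul_factorial (Nat.le_add_left m k)
      simpa [Nat.add_sub_cancel] using this)
  have h2 : ((n.choose k : ℕ) : ℂ) * (k ! : ℂ) * ((n-k)! : ℂ) = (n ! : ℂ) := by
    exact_mod_cast congrArg (Nat.cast : ℕ → ℂ) (Nat.choose_mul_factorial_mul_factorial hk)
  have h3 : x^k * x^(n-k) = x^n := by rw [← pow_add, Nat.add_sub_cancel' hk]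
  have h4 : (-2*x/(m:ℂ))^k = (-1:ℂ)^k * (2/(m:ℂ))^k * x^k := by
    rw [show -2*x/(m:ℂ) = (-1) * (2/(m:ℂ)) * x by ring, mul_pow, mul_pow]
  have hkm : ((k+m)! : ℂ) ≠ 0 := Nat.cast_ne_zero.mpr (Nat.factorial_ne_zero _)
  have hn : ((n)! : ℂ) ≠ 0 := Nat.cast_ne_zero.mpr (Nat.factorial_ne_zero _)
  have hnk : ((n-k)! : ℂ) ≠ 0 := Nat.cast_ne_zero.mpr (Nat.factorial_ne_zero _)
  have hkf : ((k)! : ℂ) ≠ 0 := Nat.cast_ne_zero.mpr (Nat.factorial_ne_zero _)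
  have hch : (((k+m).choose m : ℕ) : ℂ) ≠ 0 :=
    Nat.cast_ne_zero.mpr (Nat.choose_pos (Nat.le_add_left m k)).ne'
  rw [h4]
  field_simp
  rw [← h1, ← h2]
  ring_nf
  rw [← h3]
  ring

lemma main_hasSum_s14 (m : ℕ) (hm : 1 ≤ m) (x : ℂ) (hx : x ≠ 0) :
    HasSum (fun n : ℕ =>
      (∑ k ∈ range (n+1), (-1:ℂ)^k * (n.choose k) * (2/(m:ℂ))^k
          * stirlingS (k+m) m / ((k+m).choose m)) * x^n / n !)
      (((Complex.exp (x/m) - Complex.exp (-(x/m))) * m / (2*x))^m) := by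
  have hm0 : (m:ℂ) ≠ 0 := Nat.cast_ne_zero.mpr (by omega)
  set y : ℂ := -2*x/m with hy_def
  have hy : y ≠ 0 := by
    simp only [hy_def, div_ne_zero_iff, neg_ne_zero, mul_ne_zero_iff]
    refine ⟨⟨by norm_num, hx⟩, hm0⟩
  have hym : (y:ℂ)^m ≠ 0 := pow_ne_zero _ hy
  -- the g-series
  have hG : HasSum (fun k : ℕ => (m ! : ℂ) * stirlingS (k+m) m / (k+m)! * y^k)
      (((Complex.exp y - 1))^m / y^m) := by
    have h := hasSum_G m hm y
    have h2 := h.div_const (y^m)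
    have : (fun k : ℕ => (m ! : ℂ) * stirlingS (k+m) m / (k+m)! * y^(k+m) / y^m)
        = fun k : ℕ => (m ! : ℂ) * stirlingS (k+m) m / (k+m)! * y^k := by
      funext k
      rw [pow_add]
      field_simp
    rwa [this] at h2
  have hgnorm := summable_g m y
  have hfnorm : Summable (fun n : ℕ => ‖x ^ n / ((n)! : ℂ)‖) :=
    NormedSpace.norm_expSeries_div_summable x
  have hC := hasSum_sum_range_mul_of_summable_norm hgnorm hfnorm
  rw [hG.tsum_eq, (hasSum_exp_complex x).tsum_eq] at hC
  have hfun : (fun n : ℕ => ∑ k ∈ range (n+1),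
        ((m ! : ℂ) * stirlingS (k+m) m / (k+m)! * y^k) * (x^(n-k) / (n-k)!))
      = fun n : ℕ =>
      (∑ k ∈ range (n+1), (-1:ℂ)^k * (n.choose k) * (2/(m:ℂ))^k
          * stirlingS (k+m) m / ((k+m).choose m)) * x^n / n ! := by
    funext n
    rw [Finset.sum_mul, Finset.sum_div]
    refine sum_congr rfl fun k hk => ?_
    have hkn : k ≤ n := by have := mem_range.mp hk; omega
    exact term_eq m n k hm0 hkn x
  rw [hfun] at hC
  have hval : (Complex.exp y - 1)^m / y^m * Complex.exp x
      = ((Complex.exp (x/m) - Complex.exp (-(x/m))) * m / (2*x))^m := by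
    have hex : Complex.exp x = (Complex.exp (x/m))^m := by
      rw [← Complex.exp_nat_mul]
      congr 1
      field_simp
    have hkey : (Complex.exp y - 1) * Complex.exp (x/m)
        = Complex.exp (-(x/m)) - Complex.exp (x/m) := by
      rw [sub_mul, ← Complex.exp_add, one_mul]
      congr 2
      rw [hy_def]
      field_simp
      ring
    rw [hex, div_mul_eq_mul_div, ← mul_pow, ← div_pow, hkey]
    congr 1
    rw [hy_def]
    field_simp
    ring
  rwa [hval] at hC

theorem stmt14 (ℓ : ℕ) (hℓ : 1 ≤ ℓ) (z : ℂ) :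
    HasSum (fun j : ℕ =>
      (-1 : ℂ) ^ j *
        (∑ k ∈ Finset.range (2 * j + 1),
          (-1 : ℂ) ^ k * ((2 * j).choose k) * (2 / (ℓ : ℂ)) ^ k *
            (stirlingS (k + ℓ) ℓ) / ((k + ℓ).choose ℓ)) *
        ((ℓ : ℂ) * z) ^ (2 * j) / ((2 * j)!))
      (sinc z ^ ℓ) := by
  have hm0 : (ℓ:ℂ) ≠ 0 := Nat.cast_ne_zero.mpr (by omega)
  by_cases hz : z = 0
  · subst hz
    have h0 : ∀ j : ℕ, j ≠ 0 → (-1 : ℂ) ^ j *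
        (∑ k ∈ Finset.range (2 * j + 1),
          (-1 : ℂ) ^ k * ((2 * j).choose k) * (2 / (ℓ : ℂ)) ^ k *
            (stirlingS (k + ℓ) ℓ) / ((k + ℓ).choose ℓ)) *
        ((ℓ : ℂ) * 0) ^ (2 * j) / ((2 * j)!) = 0 := by
      intro j hj
      rw [mul_zero, zero_pow (by omega : 2*j ≠ 0)]
      simp
    convert hasSum_single (f := fun j : ℕ =>
      (-1 : ℂ) ^ j *
        (∑ k ∈ Finset.range (2 * j + 1),
          (-1 : ℂ) ^ k * ((2 * j).choose k) * (2 / (ℓ : ℂ)) ^ k *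
            (stirlingS (k + ℓ) ℓ) / ((k + ℓ).choose ℓ)) *
        ((ℓ : ℂ) * 0) ^ (2 * j) / ((2 * j)!)) 0 h0 using 1
    rw [show (2 : ℕ) * 0 = 0 from rfl]
    simp [sinc, st_self, Nat.choose_self]
  · -- z ≠ 0
    set x : ℂ := (ℓ:ℂ) * z * Complex.I with hx_def
    have hx : x ≠ 0 := by
      simp [hx_def, hm0, hz, Complex.I_ne_zero]
    have h1 := main_hasSum_s14 ℓ hℓ x hx
    have h2 := main_hasSum_s14 ℓ hℓ (-x) (neg_ne_zero.mpr hx)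
    -- the value is sinc z ^ ℓ in both cases
    have hvx : ((Complex.exp (x/ℓ) - Complex.exp (-(x/ℓ))) * ℓ / (2*x))^ℓ
        = sinc z ^ ℓ := by
      have hxl : x / ℓ = z * Complex.I := by
        rw [hx_def]; field_simp
      rw [hxl, sinc, if_neg hz, Complex.sin]
      congr 1
      field_simp [Complex.I_ne_zero]
      rw [hx_def]
      linear_combination (z * (ℓ:ℂ) * (Complex.exp (z * Complex.I) - Complex.exp (-(z * Complex.I)))) * Complex.I_sq
    have hvnx : ((Complex.exp (-x/ℓ) - Complex.exp (-(-x/ℓ))) * ℓ / (2*(-x)))^ℓ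
        = sinc z ^ ℓ := by
      rw [← hvx]
      congr 1
      rw [neg_div, neg_neg]
      ring
    rw [hvx] at h1
    rw [hvnx] at h2
    have h3 := (h1.add h2).div_const 2
    have heven : (fun n : ℕ =>
        ((∑ k ∈ range (n+1), (-1:ℂ)^k * (n.choose k) * (2/(ℓ:ℂ))^k
          * stirlingS (k+ℓ) ℓ / ((k+ℓ).choose ℓ)) * x^n / n !
        + (∑ k ∈ range (n+1), (-1:ℂ)^k * (n.choose k) * (2/(ℓ:ℂ))^k
          * stirlingS (k+ℓ) ℓ / ((k+ℓ).choose ℓ)) * (-x)^n / n !) / 2)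
        = fun n : ℕ => if Even n then
          (∑ k ∈ range (n+1), (-1:ℂ)^k * (n.choose k) * (2/(ℓ:ℂ))^k
            * stirlingS (k+ℓ) ℓ / ((k+ℓ).choose ℓ)) * x^n / n ! else 0 := by
      funext n
      rcases Nat.even_or_odd n with he | ho
      · rw [if_pos he, he.neg_pow]; ring
      · rw [if_neg (Nat.not_even_iff_odd.mpr ho), ho.neg_pow]; ring
    rw [heven, show sinc z ^ ℓ + sinc z ^ ℓ = 2 * sinc z ^ ℓ by ring,
      mul_div_cancel_left₀ _ (two_ne_zero)] at h3
    have hinj : Function.Injective (fun j : ℕ => 2 * j) := fun a b h => by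
      simpa using h
    have hsupp : ∀ n : ℕ, n ∉ Set.range (fun j : ℕ => 2 * j) →
        (if Even n then
          (∑ k ∈ range (n+1), (-1:ℂ)^k * (n.choose k) * (2/(ℓ:ℂ))^k
            * stirlingS (k+ℓ) ℓ / ((k+ℓ).choose ℓ)) * x^n / n ! else 0) = 0 := by
      intro n hn
      rw [if_neg]
      intro ⟨r, hr⟩
      exact hn ⟨r, by simp; omega⟩
    have h4 := (hinj.hasSum_iff hsupp).mpr h3
    have hfinal : ((fun n : ℕ => if Even n then
          (∑ k ∈ range (n+1), (-1:ℂ)^k * (n.choose k) * (2/(ℓ:ℂ))^k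
            * stirlingS (k+ℓ) ℓ / ((k+ℓ).choose ℓ)) * x^n / n ! else 0)
          ∘ (fun j : ℕ => 2 * j))
        = fun j : ℕ =>
      (-1 : ℂ) ^ j *
        (∑ k ∈ Finset.range (2 * j + 1),
          (-1 : ℂ) ^ k * ((2 * j).choose k) * (2 / (ℓ : ℂ)) ^ k *
            (stirlingS (k + ℓ) ℓ) / ((k + ℓ).choose ℓ)) *
        ((ℓ : ℂ) * z) ^ (2 * j) / ((2 * j)!) := by
      funext j
      simp only [Function.comp_apply, if_pos (even_two_mul j)]
      have hxp : x ^ (2*j) = (-1:ℂ)^j * ((ℓ:ℂ)*z)^(2*j) := by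
        rw [hx_def, mul_pow, pow_mul ((Complex.I)) , Complex.I_sq]
        ring
      rw [hxp]
      ring
    rw [hfinal] at h4
    exact h4
end

section
/- For m ∈ ℕ and 1 ≤ k ≤ 2m, the partial Bell polynomial evaluated at the derivatives of sinc at 0 satisfies B_{2m,k}(0, -1/3, 0, 1/5, ..., x_{2m-k+1}) = (-1)^{m+k} (2^{2m}/k!) ∑_{j=1}^{k} (-1)^j C(k, j) T(2m+j, j) / C(2m+j, j), where x_i = (1/(i+1)) cos(iπ/2). -/
open scoped Classical BigOperators Nat

section BellAux
open PowerSeries Complex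

lemma cos_nat_half (i : ℕ) :
    Real.cos (i * Real.pi / 2) = if Even i then (-1 : ℝ) ^ (i / 2) else 0 := by
  rcases Nat.even_or_odd i with ⟨t, ht⟩ | ⟨t, ht⟩
  · have h1 : (i : ℝ) * Real.pi / 2 = (t : ℝ) * Real.pi := by
      subst ht; push_cast; ring
    have h2 : Real.cos ((t : ℝ) * Real.pi) = (-1) ^ t := by
      simpa using Real.cos_nat_mul_pi_sub 0 t
    have hi2 : i / 2 = t := by omega
    rw [h1, h2, if_pos ⟨t, ht⟩, hi2]
  · have h1 : (i : ℝ) * Real.pi / 2 = (t : ℝ) * Real.pi + Real.pi / 2 := by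
      subst ht; push_cast; ring
    rw [h1, Real.cos_add, Real.cos_pi_div_two, Real.sin_nat_mul_pi, if_neg]
    · ring
    · simp [ht, Nat.even_add_one, parity_simps]

lemma centralT_zero (n : ℕ) (hn : 1 ≤ n) : centralT n 0 = 0 := by
  simp [centralT, zero_pow (by omega : n ≠ 0)]

lemma coeff_pow_congr {R : Type*} [CommRing R] {f g : PowerSeries R} {N : ℕ}
    (h : ∀ i ≤ N, PowerSeries.coeff i f = PowerSeries.coeff i g) (k n : ℕ) (hn : n ≤ N) :
    PowerSeries.coeff n (f ^ k) = PowerSeries.coeff n (g ^ k) := by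
  have hd : (PowerSeries.X : PowerSeries R) ^ (N + 1) ∣ g - f :=
    PowerSeries.X_pow_dvd_iff.mpr fun j hj => by
      rw [map_sub, h j (by omega), sub_self]
  have hd2 : (PowerSeries.X : PowerSeries R) ^ (N + 1) ∣ g ^ k - f ^ k :=
    hd.trans (sub_dvd_pow_sub_pow g f k)
  have := PowerSeries.X_pow_dvd_iff.mp hd2 n (by omega)
  rw [map_sub, sub_eq_zero] at this
  exact this.symm

/-- The power series of `sinc` over `ℂ`. -/
noncomputable def SS : PowerSeries ℂ :=
  PowerSeries.mk fun t => if Even t then (-1 : ℂ) ^ (t / 2) / ((t + 1)! : ℂ) else 0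

noncomputable def EE (a : ℂ) : PowerSeries ℂ := PowerSeries.rescale a (PowerSeries.exp ℂ)

lemma coeff_EE (a : ℂ) (n : ℕ) : PowerSeries.coeff n (EE a) = a ^ n / (n ! : ℂ) := by
  rw [EE, PowerSeries.coeff_rescale, PowerSeries.coeff_exp]
  have : (algebraMap ℚ ℂ) (1 / n !) = 1 / (n ! : ℂ) := by
    push_cast [map_div₀]; simp
  rw [this]; ring

lemma X_mul_SS :
    (PowerSeries.X : PowerSeries ℂ) * SS =
      PowerSeries.C (2 * Complex.I)⁻¹ * (EE Complex.I - EE (-Complex.I)) := by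
  ext t
  rw [PowerSeries.coeff_C_mul, map_sub, coeff_EE, coeff_EE]
  cases t with
  | zero =>
      simp
  | succ s =>
      rw [PowerSeries.coeff_succ_X_mul, SS, PowerSeries.coeff_mk]
      rcases Nat.even_or_odd s with ⟨p, hp⟩ | ⟨p, hp⟩
      · have h1 : s + 1 = 2 * p + 1 := by omega
        have hs2 : s / 2 = p := by omega
        have hI : Complex.I ^ (2 * p + 1) = (-1 : ℂ) ^ p * Complex.I := by
          rw [pow_succ, pow_mul, Complex.I_sq]
        have hI' : (-Complex.I) ^ (2 * p + 1) = -((-1 : ℂ) ^ p * Complex.I) := by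
          rw [neg_pow, hI]
          have : (-1 : ℂ) ^ (2 * p + 1) = -1 := by
            rw [pow_succ, pow_mul]; norm_num
          rw [this]; ring
        rw [if_pos ⟨p, by omega⟩, hs2, h1, hI, hI']
        have hfac : ((2 * p + 1)! : ℂ) ≠ 0 := by exact_mod_cast (Nat.factorial_pos _).ne'
        field_simp [Complex.I_ne_zero]
        ring_nf
      · have h1 : s + 1 = 2 * (p + 1) := by omega
        have hI : (-Complex.I) ^ (2 * (p + 1)) = Complex.I ^ (2 * (p + 1)) := by
          rw [neg_pow, pow_mul]; norm_num
        rw [if_neg (by simp [hp, parity_simps]), h1, hI]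
        ring

lemma EE_pow (a : ℂ) (q : ℕ) : (EE a) ^ q = EE ((q : ℂ) * a) := by
  rw [EE, ← map_pow, PowerSeries.exp_pow_eq_rescale_exp, PowerSeries.rescale_rescale]
  rfl

lemma EE_mul (a b : ℂ) : EE a * EE b = EE (a + b) :=
  PowerSeries.exp_mul_exp_eq_exp_add a b

lemma coeff_SS_pow (m j : ℕ) (hm : 1 ≤ m) :
    PowerSeries.coeff (2 * m) (SS ^ j) =
      (((-1 : ℝ) ^ m * 2 ^ (2 * m) * (j ! : ℝ) / ((2 * m + j)! : ℝ) *
        centralT (2 * m + j) j : ℝ) : ℂ) := by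
  have hcoe : PowerSeries.coeff (2 * m) (SS ^ j)
      = PowerSeries.coeff (2 * m + j) ((PowerSeries.X ^ j : PowerSeries ℂ) * SS ^ j) := by
    rw [PowerSeries.coeff_X_pow_mul]
  rw [hcoe, ← mul_pow, X_mul_SS, mul_pow, ← map_pow, PowerSeries.coeff_C_mul, sub_pow]
  rw [map_sum]
  -- rewrite each summand's coefficient
  have hterm : ∀ q ∈ Finset.range (j + 1),
      PowerSeries.coeff (2 * m + j)
        ((-1 : PowerSeries ℂ) ^ (q + j) * EE Complex.I ^ q * EE (-Complex.I) ^ (j - q) *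
          (j.choose q : PowerSeries ℂ)) =
      (-1 : ℂ) ^ (q + j) * (j.choose q : ℂ) *
        (((q : ℂ) - ((j - q : ℕ) : ℂ)) * Complex.I) ^ (2 * m + j) / ((2 * m + j)! : ℂ) := by
    intro q hq
    have hC : PowerSeries.C ((j.choose q : ℂ) * (-1) ^ (q + j))
        = (j.choose q : PowerSeries ℂ) * (-1 : PowerSeries ℂ) ^ (q + j) := by
      rw [map_mul, map_pow, map_neg, map_one, map_natCast]
    have hre : (-1 : PowerSeries ℂ) ^ (q + j) * EE Complex.I ^ q * EE (-Complex.I) ^ (j - q) *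
          (j.choose q : PowerSeries ℂ)
        = PowerSeries.C ((j.choose q : ℂ) * (-1) ^ (q + j)) *
            (EE ((q : ℂ) * Complex.I) * EE (((j - q : ℕ) : ℂ) * (-Complex.I))) := by
      rw [hC, EE_pow, EE_pow]; ring
    rw [hre, EE_mul, PowerSeries.coeff_C_mul, coeff_EE]
    have h2 : (q : ℂ) * Complex.I + ((j - q : ℕ) : ℂ) * (-Complex.I)
        = ((q : ℂ) - ((j - q : ℕ) : ℂ)) * Complex.I := by ring
    rw [h2]
    ring
  rw [Finset.sum_congr rfl hterm]
  -- now pure algebra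
  rw [centralT]
  push_cast
  rw [Finset.mul_sum, Finset.mul_sum, Finset.mul_sum]
  refine Finset.sum_congr rfl fun q hq => ?_
  have hqj : q ≤ j := by simpa [Nat.lt_succ_iff] using hq
  have hjq : ((j - q : ℕ) : ℂ) = (j : ℂ) - q := by
    push_cast [hqj]; ring
  rw [hjq]
  have hIN : Complex.I ^ (2 * m + j) = (-1 : ℂ) ^ m * Complex.I ^ j := by
    rw [pow_add, pow_mul, Complex.I_sq]
  have hfac : ((2 * m + j)! : ℂ) ≠ 0 := by exact_mod_cast (Nat.factorial_pos _).ne'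
  have hfacj : ((j)! : ℂ) ≠ 0 := by exact_mod_cast (Nat.factorial_pos _).ne'
  have h2Ij : ((2 * Complex.I)⁻¹) ^ j = ((2 : ℂ) ^ j)⁻¹ * (Complex.I ^ j)⁻¹ := by
    rw [mul_inv, mul_pow, inv_pow, inv_pow]
  have hIj : Complex.I ^ j ≠ 0 := pow_ne_zero _ Complex.I_ne_zero
  have ha : ((j : ℂ) / 2 - q) = -(((q : ℂ) - ((j : ℂ) - q)) / 2) := by ring
  rw [ha, neg_pow (((q : ℂ) - ((j : ℂ) - q)) / 2), div_pow, mul_pow, hIN, h2Ij, pow_add ((-1 : ℂ)) q j,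
    pow_add ((-1 : ℂ)) (2 * m) j,
    (by rw [pow_mul]; norm_num : (-1 : ℂ) ^ (2 * m) = 1),
    pow_add ((2 : ℂ)) (2 * m) j]
  field_simp

lemma bell_eq_coeff (n k : ℕ) (x : ℕ → ℝ) :
    bellB n k x = (n ! : ℝ) / (k ! : ℝ) *
      PowerSeries.coeff n
        ((∑ i ∈ Finset.range n,
          PowerSeries.C (x (i + 1) / ((i + 1)! : ℝ)) * PowerSeries.X ^ (i + 1)) ^ k) := by
  set c : ℕ → ℝ := fun i => x i / (i ! : ℝ) with hc
  have hxc : ∀ i : ℕ, x (i + 1) / ((i + 1)! : ℝ) = c (i + 1) := fun i => rfl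
  rw [Finset.sum_pow_eq_sum_piAntidiag, map_sum]
  have hterm : ∀ g ∈ Finset.piAntidiag (Finset.range n) k,
      PowerSeries.coeff n ((Nat.multinomial (Finset.range n) g : PowerSeries ℝ) *
        ∏ i ∈ Finset.range n, (PowerSeries.C (x (i + 1) / ((i + 1)! : ℝ)) *
          PowerSeries.X ^ (i + 1)) ^ g i) =
      if (∑ i ∈ Finset.range n, (i + 1) * g i) = n then
        (Nat.multinomial (Finset.range n) g : ℝ) * ∏ i ∈ Finset.range n, c (i + 1) ^ g i
      else 0 := by
    intro g hg
    have hprod : (∏ i ∈ Finset.range n, (PowerSeries.C (x (i + 1) / ((i + 1)! : ℝ)) *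
          PowerSeries.X ^ (i + 1)) ^ g i) =
        PowerSeries.C (∏ i ∈ Finset.range n, c (i + 1) ^ g i) *
          PowerSeries.X ^ (∑ i ∈ Finset.range n, (i + 1) * g i) := by
      rw [map_prod, ← Finset.prod_pow_eq_pow_sum, ← Finset.prod_mul_distrib]
      refine Finset.prod_congr rfl fun i _ => ?_
      rw [mul_pow, ← map_pow, ← pow_mul, hxc]
    rw [hprod, ← map_natCast (PowerSeries.C (R := ℝ)), ← mul_assoc, ← map_mul,
      PowerSeries.coeff_C_mul, PowerSeries.coeff_X_pow]
    simp only [mul_ite, mul_one, mul_zero]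
    by_cases h : (∑ i ∈ Finset.range n, (i + 1) * g i) = n
    · rw [if_pos h, if_pos h.symm]
    · rw [if_neg h, if_neg fun hh => h hh.symm]
  rw [Finset.sum_congr rfl hterm, ← Finset.sum_filter, Finset.mul_sum, bellB]
  refine Finset.sum_bij' (i := fun ℓ _ => fun t => if h : t < n then ((ℓ ⟨t, h⟩ : ℕ)) else 0)
    (j := fun g hg => fun i : Fin n => (⟨g i.1, ?_⟩ : Fin (n + 1)))
    ?_ ?_ ?_ ?_ ?_
  · -- bound : g i.1 < n + 1
    rw [Finset.mem_filter, Finset.mem_piAntidiag] at hg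
    have hle : (i.1 + 1) * g i.1 ≤ ∑ t ∈ Finset.range n, (t + 1) * g t :=
      Finset.single_le_sum (f := fun t => (t + 1) * g t) (fun _ _ => Nat.zero_le _)
        (Finset.mem_range.mpr i.2)
    have := hg.2
    nlinarith [i.2, Nat.zero_le (g i.1)]
  · -- hi : maps into the filter set
    intro ℓ hℓ
    rw [Finset.mem_filter] at hℓ ⊢
    obtain ⟨-, h1, h2⟩ := hℓ
    have hsum : ∀ (F : ℕ → ℕ → ℕ),
        (∑ t ∈ Finset.range n, F t (if h : t < n then ((ℓ ⟨t, h⟩ : ℕ)) else 0)) =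
        ∑ i : Fin n, F i.1 (ℓ i).1 := by
      intro F
      rw [← Fin.sum_univ_eq_sum_range (fun t => F t (if h : t < n then ((ℓ ⟨t, h⟩ : ℕ)) else 0)) n]
      exact Finset.sum_congr rfl fun i _ => by rw [dif_pos i.2]
    refine ⟨Finset.mem_piAntidiag.mpr ⟨?_, ?_⟩, ?_⟩
    · rw [hsum (fun _ v => v)]; exact h2
    · intro t ht
      rw [Finset.mem_range]
      by_contra hT
      simp [dif_neg (fun h => hT h)] at ht
    · rw [hsum (fun t v => (t + 1) * v)]; exact h1
  · -- hj : back into the Fin filter set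
    intro g hg
    rw [Finset.mem_filter] at hg
    obtain ⟨hg1, hg2⟩ := hg
    rw [Finset.mem_piAntidiag] at hg1
    rw [Finset.mem_filter]
    refine ⟨Finset.mem_univ _, ?_, ?_⟩
    · rw [Fin.sum_univ_eq_sum_range (fun t => (t + 1) * g t) n]
      exact hg2
    · rw [Fin.sum_univ_eq_sum_range (fun t => g t) n]
      exact hg1.1
  · -- left inverse
    intro ℓ hℓ
    funext i
    ext
    simp [i.2]
  · -- right inverse
    intro g hg
    funext t
    by_cases h : t < n
    · simp [h]
    · simp only [dif_neg h]
      rw [Finset.mem_filter, Finset.mem_piAntidiag] at hg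
      by_contra hne
      have := hg.1.2 t fun hz => (hne hz.symm).elim
      exact h (Finset.mem_range.mp this)
  · -- term equality
    intro ℓ hℓ
    rw [Finset.mem_filter] at hℓ
    obtain ⟨-, h1, h2⟩ := hℓ
    set g : ℕ → ℕ := fun t => if h : t < n then ((ℓ ⟨t, h⟩ : ℕ)) else 0 with hgdef
    have hsum : ∑ t ∈ Finset.range n, g t = k := by
      rw [← Fin.sum_univ_eq_sum_range (fun t => g t) n, ← h2]
      exact Finset.sum_congr rfl fun i _ => by simp [hgdef, i.2]
    have hprodfac : (∏ i : Fin n, ((ℓ i).1)! : ℝ) = ∏ t ∈ Finset.range n, ((g t)! : ℝ) := by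
      rw [← Fin.prod_univ_eq_prod_range (fun t => ((g t)! : ℝ)) n]
      exact Finset.prod_congr rfl fun i _ => by simp [hgdef, i.2]
    have hprodc : (∏ i : Fin n, (x (i.1 + 1) / (i.1 + 1)!) ^ (ℓ i).1)
        = ∏ t ∈ Finset.range n, c (t + 1) ^ g t := by
      rw [← Fin.prod_univ_eq_prod_range (fun t => c (t + 1) ^ g t) n]
      exact Finset.prod_congr rfl fun i _ => by simp [hgdef, hc, i.2]
    have hmult : (Nat.multinomial (Finset.range n) g : ℝ) *
        ∏ t ∈ Finset.range n, ((g t)! : ℝ) = (k ! : ℝ) := by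
      have := Nat.multinomial_spec (Finset.range n) g
      rw [hsum] at this
      exact_mod_cast by rw [mul_comm]; exact_mod_cast congrArg (Nat.cast (R := ℝ)) this
    have hPne : (∏ t ∈ Finset.range n, ((g t)! : ℝ)) ≠ 0 :=
      Finset.prod_ne_zero_iff.mpr fun t _ => by exact_mod_cast (Nat.factorial_pos _).ne'
    have hkne : (k ! : ℝ) ≠ 0 := by exact_mod_cast (Nat.factorial_pos _).ne'
    have hcastP : ((∏ i : Fin n, ((ℓ i : ℕ))! : ℕ) : ℝ)
        = ∏ t ∈ Finset.range n, ((g t)! : ℝ) := by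
      push_cast
      exact hprodfac
    have hmultval : (Nat.multinomial (Finset.range n) g : ℝ)
        = (k ! : ℝ) / ∏ t ∈ Finset.range n, ((g t)! : ℝ) := by
      rw [eq_div_iff hPne]
      exact hmult
    simp only [hprodc, hcastP]
    rw [hmultval]
    field_simp

lemma coeff_truncsum {R : Type*} [CommRing R] (n : ℕ) (a : ℕ → R) (t : ℕ) :
    PowerSeries.coeff t (∑ i ∈ Finset.range n, PowerSeries.C (a (i + 1)) *
      PowerSeries.X ^ (i + 1)) = if 1 ≤ t ∧ t ≤ n then a t else 0 := by
  rw [map_sum]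
  simp_rw [PowerSeries.coeff_C_mul, PowerSeries.coeff_X_pow]
  by_cases h : 1 ≤ t ∧ t ≤ n
  · obtain ⟨ht1, ht2⟩ := h
    rw [Finset.sum_eq_single (t - 1)]
    · rw [if_pos (by omega : t = t - 1 + 1), mul_one, if_pos ⟨ht1, ht2⟩]
      congr 1
      omega
    · intro i _ hne
      rw [if_neg (by omega), mul_zero]
    · intro hmem
      exact absurd (Finset.mem_range.mpr (by omega)) hmem
  · rw [if_neg h]
    refine Finset.sum_eq_zero fun i hi => ?_
    rw [Finset.mem_range] at hi
    rw [if_neg (by omega), mul_zero]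


end BellAux

theorem stmt16 (m k : ℕ) (hm : 1 ≤ m) (h1 : 1 ≤ k) (h2 : k ≤ 2 * m) :
    bellB (2 * m) k (fun i => (1 / ((i : ℝ) + 1)) * Real.cos (i * Real.pi / 2)) =
      (-1 : ℝ) ^ (m + k) * (2 ^ (2 * m) / (k ! : ℝ)) *
        ∑ j ∈ Finset.Icc 1 k,
          (-1 : ℝ) ^ j * (k.choose j) * centralT (2 * m + j) j / ((2 * m + j).choose j) := by
  set xf : ℕ → ℝ := fun i => (1 / ((i : ℝ) + 1)) * Real.cos (i * Real.pi / 2) with hxf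
  set F : PowerSeries ℝ := ∑ i ∈ Finset.range (2 * m),
    PowerSeries.C (xf (i + 1) / ((i + 1)! : ℝ)) * PowerSeries.X ^ (i + 1) with hF
  -- the complexified truncated series
  set aC : ℕ → ℂ := fun i => ((xf i / ((i)! : ℝ) : ℝ) : ℂ) with haC
  set Fc : PowerSeries ℂ := ∑ i ∈ Finset.range (2 * m),
    PowerSeries.C (aC (i + 1)) * PowerSeries.X ^ (i + 1) with hFc
  have hmap : PowerSeries.map Complex.ofRealHom F = Fc := by
    rw [hF, hFc, map_sum]
    refine Finset.sum_congr rfl fun i _ => ?_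
    rw [map_mul, map_pow, PowerSeries.map_C, PowerSeries.map_X]
    rfl
  have hagree : ∀ t ≤ 2 * m, PowerSeries.coeff t Fc = PowerSeries.coeff t (SS - 1) := by
    intro t ht
    rw [hFc, coeff_truncsum, map_sub, PowerSeries.coeff_one, SS, PowerSeries.coeff_mk]
    rcases Nat.eq_zero_or_pos t with rfl | htpos
    · norm_num
    · rw [if_pos ⟨htpos, ht⟩, if_neg (by omega : ¬ t = 0), sub_zero, haC, hxf]
      simp only [cos_nat_half]
      rcases Nat.even_or_odd t with he | ho
      · rw [if_pos he, if_pos he]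
        have hfe : (((t + 1)! : ℕ) : ℂ) = ((t : ℂ) + 1) * ((t ! : ℕ) : ℂ) := by
          rw [Nat.factorial_succ]; push_cast; ring
        have htne : ((t : ℂ) + 1) ≠ 0 := by
          intro hh
          have := congrArg Complex.re hh
          simp at this
          nlinarith [this]
        have htfne : (((t !) : ℕ) : ℂ) ≠ 0 := by exact_mod_cast (Nat.factorial_pos _).ne'
        rw [hfe]
        push_cast
        field_simp
      · rw [if_neg (Nat.not_even_iff_odd.mpr ho), if_neg (Nat.not_even_iff_odd.mpr ho)]
        simp
  have hb : bellB (2 * m) k xf = ((2 * m)! : ℝ) / (k ! : ℝ) *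
      PowerSeries.coeff (2 * m) (F ^ k) := bell_eq_coeff (2 * m) k xf
  have hcast : ((PowerSeries.coeff (2 * m) (F ^ k) : ℝ) : ℂ)
      = PowerSeries.coeff (2 * m) ((SS - 1) ^ k) := by
    have : ((PowerSeries.coeff (2 * m) (F ^ k) : ℝ) : ℂ)
        = PowerSeries.coeff (2 * m) ((PowerSeries.map Complex.ofRealHom F) ^ k) := by
      rw [← map_pow, PowerSeries.coeff_map]
      rfl
    rw [this, hmap]
    exact coeff_pow_congr hagree k (2 * m) le_rfl
  -- expand (SS - 1)^k
  have hsub : PowerSeries.coeff (2 * m) ((SS - 1) ^ k) =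
      ∑ j ∈ Finset.range (k + 1), (-1 : ℂ) ^ (j + k) * (k.choose j : ℂ) *
        (((-1 : ℝ) ^ m * 2 ^ (2 * m) * (j ! : ℝ) / ((2 * m + j)! : ℝ) *
          centralT (2 * m + j) j : ℝ) : ℂ) := by
    rw [sub_pow, map_sum]
    refine Finset.sum_congr rfl fun j hj => ?_
    have hC : PowerSeries.C ((k.choose j : ℂ) * (-1) ^ (j + k))
        = (k.choose j : PowerSeries ℂ) * (-1 : PowerSeries ℂ) ^ (j + k) := by
      rw [map_mul, map_pow, map_neg, map_one, map_natCast]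
    have hre : (-1 : PowerSeries ℂ) ^ (j + k) * SS ^ j * (1 : PowerSeries ℂ) ^ (k - j) *
          (k.choose j : PowerSeries ℂ)
        = PowerSeries.C ((k.choose j : ℂ) * (-1) ^ (j + k)) * SS ^ j := by
      rw [hC, one_pow]; ring
    rw [hre, PowerSeries.coeff_C_mul, coeff_SS_pow m j hm]
    ring
  -- assemble
  have key : (bellB (2 * m) k xf : ℂ) =
      ((-1 : ℝ) ^ (m + k) * (2 ^ (2 * m) / (k ! : ℝ)) *
        ∑ j ∈ Finset.Icc 1 k,
          (-1 : ℝ) ^ j * (k.choose j) * centralT (2 * m + j) j /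
            ((2 * m + j).choose j) : ℝ) := by
    rw [hb]
    push_cast
    rw [hcast, hsub]
    have hins : Finset.range (k + 1) = insert 0 (Finset.Icc 1 k) := by
      ext t; simp only [Finset.mem_range, Finset.mem_insert, Finset.mem_Icc]; omega
    rw [hins, Finset.sum_insert (by simp)]
    have h0 : centralT (2 * m + 0) 0 = 0 := by
      rw [Nat.add_zero]; exact centralT_zero (2 * m) (by omega)
    rw [h0, mul_zero, Complex.ofReal_zero, mul_zero, zero_add]
    rw [Finset.mul_sum, Finset.mul_sum]
    refine Finset.sum_congr rfl fun j hj => ?_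
    rw [Finset.mem_Icc] at hj
    have hcmf : ((2 * m + j).choose j : ℂ) * ((j ! : ℂ) * ((2 * m)! : ℂ)) = ((2 * m + j)! : ℂ) := by
      have := Nat.add_choose_mul_factorial_mul_factorial (2 * m) j
      exact_mod_cast by push_cast [← this]; ring
    have hkne : ((k !) : ℂ) ≠ 0 := by exact_mod_cast (Nat.factorial_pos _).ne'
    have hjne : ((j !) : ℂ) ≠ 0 := by exact_mod_cast (Nat.factorial_pos _).ne'
    have hNne : (((2 * m + j)!) : ℂ) ≠ 0 := by exact_mod_cast (Nat.factorial_pos _).ne'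
    have hCne : (((2 * m + j).choose j) : ℂ) ≠ 0 := by
      exact_mod_cast (Nat.choose_pos (by omega)).ne'
    have h2mne : (((2 * m)!) : ℂ) ≠ 0 := by exact_mod_cast (Nat.factorial_pos _).ne'
    push_cast
    rw [pow_add ((-1 : ℂ)) j k, pow_add ((-1 : ℂ)) m k]
    field_simp
    rw [← hcmf]
    ring
  exact_mod_cast key
end
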